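/- arXiv:2301.02973 — 8 statements merged into one kernel-verified Lean document; each statement's English description precedes it below -/
import Mathlib

section
/- Let H be a hypergraph on vertex set V, and let u, v ∈ V be vertices such that every hyperedge containing v also contains u (written v ⪯ u). Let F be a graph, and suppose H contains a Berge-F (i.e., there is an injection from V(F) into V and a bijection φ from E(F) to E(H') for some subhypergraph H' of H, with each graph edge contained in its image) whose core vertices include v but not u. Then H also contains a Berge-F whose core vertices are the same except with u in place of v. -/
/-- If `v ⪯ u` (every hyperedge containing `v` contains `u`) and `H`
contains a Berge-`F` whose core vertices include `v` but not `u`, then `H` contains a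
Berge-`F` with the same core vertices except `u` in place of `v`. -/
theorem stmt0 {V α : Type*} (H : Set (Set V)) (u v : V)
    (hpre : ∀ e ∈ H, v ∈ e → u ∈ e)
    (F : SimpleGraph α)
    (ψ : α → V) (hψ : Function.Injective ψ)
    (φ : Sym2 α → Set V) (hφinj : Set.InjOn φ F.edgeSet)
    (hφ : ∀ e ∈ F.edgeSet, φ e ∈ H ∧ ∀ x ∈ e, ψ x ∈ φ e)
    (hv : v ∈ Set.range ψ) (hu : u ∉ Set.range ψ) :
    ∃ ψ' : α → V, Function.Injective ψ' ∧
      Set.range ψ' = insert u (Set.range ψ \ {v}) ∧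
      ∃ φ' : Sym2 α → Set V, Set.InjOn φ' F.edgeSet ∧
        ∀ e ∈ F.edgeSet, φ' e ∈ H ∧ ∀ x ∈ e, ψ' x ∈ φ' e := by
  classical
  refine ⟨fun x => if ψ x = v then u else ψ x, ?_, ?_, φ, hφinj, ?_⟩
  · intro a b hab
    by_cases ha : ψ a = v <;> by_cases hb : ψ b = v <;> simp [ha, hb] at hab
    · exact hψ (ha.trans hb.symm)
    · exact absurd ⟨b, hab.symm⟩ hu
    · exact absurd ⟨a, hab⟩ hu
    · exact hψ hab
  · ext w
    constructor
    · rintro ⟨x, hx⟩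
      by_cases hxv : ψ x = v
      · simp [hxv] at hx; simp [hx.symm]
      · simp [hxv] at hx
        exact Or.inr ⟨⟨x, hx⟩, by simp [← hx, hxv]⟩
    · rintro (rfl | ⟨⟨x, hx⟩, hw⟩)
      · obtain ⟨x, hx⟩ := hv
        exact ⟨x, by simp [hx]⟩
      · refine ⟨x, ?_⟩
        simp only [Set.mem_singleton_iff] at hw
        simp only []
        rw [if_neg (hx ▸ hw), hx]
  · intro e he
    obtain ⟨heH, hin⟩ := hφ e he
    refine ⟨heH, fun x hx => ?_⟩
    by_cases hxv : ψ x = v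
    · simpa [hxv] using hpre _ heH (hxv ▸ hin x hx)
    · simpa [hxv] using hin x hx
end

section
/- Fix k ≥ 3. Let C(k,4) be the k-uniform hypergraph on vertex set {c₁,...,c₅} ∪ D with D = {d₁,...,d_{k−3}}, whose hyperedges are the five sets {c_i, c_{i+1}, c_{i+2}} ∪ D for i ∈ {1,...,5}, indices modulo 5. Then every set of three distinct vertices of C(k,4) is the set of core vertices of a Berge-K₃ (Berge triangle) in C(k,4). -/
/-- The hyperedges of `C(k,4)`: vertices `0,...,4` are `c₁,...,c₅` and
`D = {5,...,k+1}` (so `|D| = k-3`); the edges are `{cᵢ, cᵢ₊₁, cᵢ₊₂} ∪ D`, indices mod 5. -/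
def C4edges (k : ℕ) : Finset (Finset ℕ) :=
  (Finset.range 5).image
    (fun i => ({i, (i+1) % 5, (i+2) % 5} : Finset ℕ) ∪ Finset.Ico 5 (k+2))

/-- The vertex set of `C(k,4)`. -/
def C4verts (k : ℕ) : Finset ℕ := Finset.range (k+2)

/-- The triple part of edge `i`. -/
def C4tri (i : ℕ) : Finset ℕ := {i, (i+1) % 5, (i+2) % 5}

set_option maxHeartbeats 4000000 in
set_option synthInstance.maxSize 400 in
set_option maxRecDepth 4000 in
lemma C4key : ∀ a b c : Fin 6,
    (a ≠ b ∨ 5 ≤ a.val ∨ 5 ≤ b.val) → (b ≠ c ∨ 5 ≤ b.val ∨ 5 ≤ c.val) →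
    (a ≠ c ∨ 5 ≤ a.val ∨ 5 ≤ c.val) →
    ∃ i j l : Fin 5, i ≠ j ∧ j ≠ l ∧ i ≠ l ∧
      (5 ≤ a.val ∨ a.val ∈ C4tri i.val) ∧ (5 ≤ b.val ∨ b.val ∈ C4tri i.val) ∧
      (5 ≤ b.val ∨ b.val ∈ C4tri j.val) ∧ (5 ≤ c.val ∨ c.val ∈ C4tri j.val) ∧
      (5 ≤ a.val ∨ a.val ∈ C4tri l.val) ∧ (5 ≤ c.val ∨ c.val ∈ C4tri l.val) := by
  decide

lemma C4sep : ∀ i j : Fin 5, i ≠ j →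
    ∃ v : Fin 5, v.val ∈ C4tri i.val ∧ v.val ∉ C4tri j.val := by
  decide

lemma C4edge_mem (k : ℕ) (i : Fin 5) :
    C4tri i.val ∪ Finset.Ico 5 (k+2) ∈ C4edges k := by
  apply Finset.mem_image.2
  exact ⟨i.val, Finset.mem_range.2 i.isLt, rfl⟩

lemma C4edge_ne (k : ℕ) (i j : Fin 5) (hij : i ≠ j) :
    C4tri i.val ∪ Finset.Ico 5 (k+2) ≠ C4tri j.val ∪ Finset.Ico 5 (k+2) := by
  obtain ⟨v, hv1, hv2⟩ := C4sep i j hij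
  intro h
  have h1 : v.val ∈ C4tri i.val ∪ Finset.Ico 5 (k+2) := Finset.mem_union_left _ hv1
  rw [h] at h1
  rcases Finset.mem_union.1 h1 with h2 | h2
  · exact hv2 h2
  · have := (Finset.mem_Ico.1 h2).1
    omega

/-- every three distinct vertices of `C(k,4)` are the core vertices of a
Berge triangle: there are three distinct hyperedges `e₁,e₂,e₃` with `{x,y} ⊆ e₁`,
`{y,z} ⊆ e₂`, `{x,z} ⊆ e₃`. -/
theorem stmt3 (k : ℕ) (hk : 3 ≤ k) (x y z : ℕ)
    (hx : x ∈ C4verts k) (hy : y ∈ C4verts k) (hz : z ∈ C4verts k)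
    (hxy : x ≠ y) (hyz : y ≠ z) (hxz : x ≠ z) :
    ∃ e₁ ∈ C4edges k, ∃ e₂ ∈ C4edges k, ∃ e₃ ∈ C4edges k,
      e₁ ≠ e₂ ∧ e₂ ≠ e₃ ∧ e₁ ≠ e₃ ∧
      x ∈ e₁ ∧ y ∈ e₁ ∧ y ∈ e₂ ∧ z ∈ e₂ ∧ x ∈ e₃ ∧ z ∈ e₃ := by
  simp only [C4verts, Finset.mem_range] at hx hy hz
  have h6 : ∀ v : ℕ, min v 5 < 6 := fun v => by omega
  set a : Fin 6 := ⟨min x 5, h6 x⟩ with ha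
  set b : Fin 6 := ⟨min y 5, h6 y⟩ with hb
  set c : Fin 6 := ⟨min z 5, h6 z⟩ with hc
  have hav : a.val = min x 5 := rfl
  have hbv : b.val = min y 5 := rfl
  have hcv : c.val = min z 5 := rfl
  have hne : ∀ (u v : ℕ), u ≠ v → (⟨min u 5, h6 u⟩ : Fin 6) ≠ ⟨min v 5, h6 v⟩ ∨
      5 ≤ ((⟨min u 5, h6 u⟩ : Fin 6)).val ∨ 5 ≤ ((⟨min v 5, h6 v⟩ : Fin 6)).val := by
    intro u v huv
    by_cases hu : u < 5
    · by_cases hv : v < 5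
      · left
        simp only [ne_eq, Fin.mk.injEq]
        omega
      · right; right; simp; omega
    · right; left; simp; omega
  obtain ⟨i, j, l, hij, hjl, hil, h1, h2, h3, h4, h5', h6'⟩ :=
    C4key a b c (hne x y hxy) (hne y z hyz) (hne x z hxz)
  have memedge : ∀ (v : ℕ) (m : Fin 5), v < k + 2 →
      (5 ≤ min v 5 ∨ min v 5 ∈ C4tri m.val) →
      v ∈ C4tri m.val ∪ Finset.Ico 5 (k+2) := by
    intro v m hv hm
    by_cases h5 : v < 5
    · refine Finset.mem_union_left _ ?_
      rcases hm with h | h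
      · omega
      · rwa [min_eq_left (by omega)] at h
    · exact Finset.mem_union_right _ (Finset.mem_Ico.2 ⟨by omega, hv⟩)
  exact ⟨_, C4edge_mem k i, _, C4edge_mem k j, _, C4edge_mem k l,
    C4edge_ne k i j hij, C4edge_ne k j l hjl, C4edge_ne k i l hil,
    memedge x i hx h1, memedge y i hy h2, memedge y j hy h3,
    memedge z j hz h4, memedge x l hx h5', memedge z l hz h6'⟩
end

section
/- Fix k ≥ 3 and ℓ ≥ 5. Let C(k,ℓ) be the k-uniform hypergraph from Construction: start with the graph K = K_ℓ minus the edge c₁c₂ on C = {c₁,...,c_ℓ}, with D = {d₁,...,d_{k−3}}, and extend each 2-edge e of K to a k-set as follows: if c₁ ∈ e and c₂ ∉ e, extend to e ∪ {c₂} ∪ D; if e = {c₂,c₃}, to e ∪ {c₄} ∪ D; if e = {c₂,c₄}, to e ∪ {c₅} ∪ D; if c₂ ∈ e, c₁ ∉ e, c₃ ∉ e, c₄ ∉ e, to e ∪ {c₃} ∪ D; if c₁,c₂ ∉ e, to e ∪ {c₁} ∪ D. Then for every pair of distinct vertices x, y of C(k,ℓ), adding the 2-element edge {x,y} creates a Berge-K_ℓ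 using {x,y}. -/
/-- A Berge edge map for a clique on core vertex set `core` in a hypergraph `H`:
an assignment of distinct hyperedges to the pairs of distinct core vertices,
each pair contained in its assigned hyperedge. -/
def BergeCliqueMap {V : Type*} (H : Finset (Finset V)) (core : Finset V)
    (φ : Sym2 V → Finset V) : Prop :=
  Set.InjOn φ {p : Sym2 V | ∃ x ∈ core, ∃ y ∈ core, x ≠ y ∧ p = s(x, y)} ∧
  ∀ x ∈ core, ∀ y ∈ core, x ≠ y →
    φ s(x, y) ∈ H ∧ x ∈ φ s(x, y) ∧ y ∈ φ s(x, y)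

/-- `H` contains a Berge-`K_l` with the given set of core vertices. -/
def HasBergeCliqueOn {V : Type*} (H : Finset (Finset V)) (core : Finset V) : Prop :=
  ∃ φ : Sym2 V → Finset V, BergeCliqueMap H core φ

/-- `H` contains a Berge-`K_l`. -/
def HasBergeClique {V : Type*} (l : ℕ) (H : Finset (Finset V)) : Prop :=
  ∃ core : Finset V, core.card = l ∧ HasBergeCliqueOn H core

/-- `H` contains a Berge-`K_l` using the hyperedge `e`. -/
def HasBergeCliqueUsing {V : Type*} (l : ℕ) (H : Finset (Finset V)) (e : Finset V) : Prop :=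
  ∃ core : Finset V, core.card = l ∧ ∃ φ : Sym2 V → Finset V,
    BergeCliqueMap H core φ ∧ ∃ x ∈ core, ∃ y ∈ core, x ≠ y ∧ φ s(x, y) = e

/-- The index of the extra `c`-vertex used to extend the pair `{i,j}` (an edge of
`K_ℓ − c₁c₂`, where `c₁,...,c₅` have indices `0,...,4`) to a `k`-set, following the
construction: a pair containing `c₁` but not `c₂` gets `c₂`; `{c₂,c₃}` gets `c₄`;
`{c₂,c₄}` gets `c₅`; a pair containing `c₂` but none of `c₁,c₃,c₄` gets `c₃`;
a pair avoiding `c₁,c₂` gets `c₁`. -/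
def extraIdx (i j : ℕ) : ℕ :=
  if (i = 0 ∨ j = 0) ∧ ¬(i = 1 ∨ j = 1) then 1
  else if (i = 1 ∧ j = 2) ∨ (i = 2 ∧ j = 1) then 3
  else if (i = 1 ∧ j = 3) ∨ (i = 3 ∧ j = 1) then 4
  else if i = 1 ∨ j = 1 then 2
  else 0

/-- The hyperedge of `C(k,l)` obtained by extending the pair `{i,j}`:
`{cᵢ, cⱼ, c_{extraIdx i j}} ∪ D`, where `D = {l, l+1, ..., l+k-4}` (so `|D| = k-3`). -/
def C5edge (k l i j : ℕ) : Finset ℕ :=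
  ({i, j, extraIdx i j} : Finset ℕ) ∪ Finset.Ico l (l + (k - 3))

/-- The hyperedges of `C(k,l)` for `l ≥ 5`: one `k`-edge for each edge of
`K_l − c₁c₂` (vertices `0,...,l-1` are `c₁,...,c_l`). -/
def C5edges (k l : ℕ) : Finset (Finset ℕ) :=
  (((Finset.range l) ×ˢ (Finset.range l)).filter
      (fun p => p.1 < p.2 ∧ ¬(p.1 = 0 ∧ p.2 = 1))).image
    (fun p => C5edge k l p.1 p.2)

/-- The vertex set of `C(k,l)` for `l ≥ 5`. -/
def C5verts (k l : ℕ) : Finset ℕ := Finset.range (l + (k - 3))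


set_option maxHeartbeats 1000000 in
lemma extraIdx_spec {i j : ℕ} (hij : i < j) (hne : ¬(i = 0 ∧ j = 1)) :
    (i = 0 ∧ 2 ≤ j ∧ extraIdx i j = 1) ∨
    (i = 1 ∧ j = 2 ∧ extraIdx i j = 3) ∨
    (i = 1 ∧ j = 3 ∧ extraIdx i j = 4) ∨
    (i = 1 ∧ 4 ≤ j ∧ extraIdx i j = 2) ∨
    (2 ≤ i ∧ extraIdx i j = 0) := by
  simp only [extraIdx]
  split_ifs with h1 h2 h3 h4 <;> omega

lemma mem_C5edge_D {k l d : ℕ} (i j : ℕ) (h1 : l ≤ d) (h2 : d < l + (k - 3)) :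
    d ∈ C5edge k l i j := by
  simp [C5edge, Finset.mem_Ico]; omega

lemma mem_C5edge_iff {k l i j z : ℕ} (hz : z < l) :
    z ∈ C5edge k l i j ↔ (z = i ∨ z = j ∨ z = extraIdx i j) := by
  simp [C5edge, Finset.mem_Ico]; omega

lemma C5edge_mem_C5edges {k l i j : ℕ} (hij : i < j) (hjl : j < l)
    (hne : ¬(i = 0 ∧ j = 1)) : C5edge k l i j ∈ C5edges k l := by
  simp only [C5edges, Finset.mem_image]
  exact ⟨(i, j), by simp [Finset.mem_filter, Finset.mem_product]; omega, rfl⟩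

lemma C5edge_inj {k l i j i' j' : ℕ} (hl : 5 ≤ l)
    (hij : i < j) (hjl : j < l) (hne : ¬(i = 0 ∧ j = 1))
    (hij' : i' < j') (hjl' : j' < l) (hne' : ¬(i' = 0 ∧ j' = 1))
    (h : C5edge k l i j = C5edge k l i' j') : i = i' ∧ j = j' := by
  have s1 := extraIdx_spec hij hne
  have s2 := extraIdx_spec hij' hne'
  have m1 : i ∈ C5edge k l i' j' := h ▸ (by rw [mem_C5edge_iff (by omega)]; omega)
  have m2 : j ∈ C5edge k l i' j' := h ▸ (by rw [mem_C5edge_iff (by omega)]; omega)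
  have m3 : i' ∈ C5edge k l i j := h.symm ▸ (by rw [mem_C5edge_iff (by omega)]; omega)
  have m4 : j' ∈ C5edge k l i j := h.symm ▸ (by rw [mem_C5edge_iff (by omega)]; omega)
  rw [mem_C5edge_iff (by omega)] at m1 m2 m3 m4
  omega

lemma C5edge_ne_pair {k l i j x y : ℕ} (hij : i < j) (hne : ¬(i = 0 ∧ j = 1)) :
    C5edge k l i j ≠ ({x, y} : Finset ℕ) := by
  intro h
  have s := extraIdx_spec hij hne
  have h3 : ({i, j, extraIdx i j} : Finset ℕ) ⊆ C5edge k l i j :=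
    Finset.subset_union_left
  have hc3 : ({i, j, extraIdx i j} : Finset ℕ).card = 3 := by
    rw [Finset.card_insert_of_notMem (by simp; omega),
        Finset.card_insert_of_notMem (by simp; omega), Finset.card_singleton]
  have h4 := Finset.card_le_card (h ▸ h3)
  have h5 : ({x, y} : Finset ℕ).card ≤ 2 :=
    (Finset.card_insert_le _ _).trans (by simp)
  omega

lemma build {l : ℕ} {x y : ℕ} (H : Finset (Finset ℕ)) (core : Finset ℕ)
    (hcard : core.card = l) (hx : x ∈ core) (hy : y ∈ core) (hxy : x ≠ y)
    (G : ℕ → ℕ → Finset ℕ)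
    (hinj : ∀ a ∈ core, ∀ b ∈ core, ∀ c ∈ core, ∀ d ∈ core,
      a < b → c < d → G a b = G c d → a = c ∧ b = d)
    (hmem : ∀ a ∈ core, ∀ b ∈ core, a < b →
      G a b ∈ H ∧ a ∈ G a b ∧ b ∈ G a b)
    (hG : G (min x y) (max x y) = ({x, y} : Finset ℕ)) :
    HasBergeCliqueUsing l H ({x, y} : Finset ℕ) := by
  refine ⟨core, hcard, Sym2.lift ⟨fun a b => G (min a b) (max a b), ?_⟩, ⟨?_, ?_⟩,
    x, hx, y, hy, hxy, ?_⟩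
  · intro a b; simp [min_comm, max_comm]
  · rintro p ⟨a, ha, b, hb, hab, rfl⟩ q ⟨c, hc, d, hd, hcd, rfl⟩ h
    simp only [Sym2.lift_mk] at h
    have hmin : min a b ∈ core := by rcases min_choice a b with h' | h' <;> rw [h'] <;> assumption
    have hmax : max a b ∈ core := by rcases max_choice a b with h' | h' <;> rw [h'] <;> assumption
    have hmin' : min c d ∈ core := by rcases min_choice c d with h' | h' <;> rw [h'] <;> assumption
    have hmax' : max c d ∈ core := by rcases max_choice c d with h' | h' <;> rw [h'] <;> assumption
    have h1 : min a b < max a b := by omega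
    have h2 : min c d < max c d := by omega
    obtain ⟨e1, e2⟩ := hinj _ hmin _ hmax _ hmin' _ hmax' h1 h2 h
    rw [Sym2.eq_iff]
    omega
  · intro a ha b hb hab
    simp only [Sym2.lift_mk]
    have hmin : min a b ∈ core := by rcases min_choice a b with h' | h' <;> rw [h'] <;> assumption
    have hmax : max a b ∈ core := by rcases max_choice a b with h' | h' <;> rw [h'] <;> assumption
    obtain ⟨g1, g2, g3⟩ := hmem _ hmin _ hmax (by omega)
    refine ⟨g1, ?_, ?_⟩ <;> rcases le_total a b with h' | h' <;>
      simp [min_eq_left, min_eq_right, max_eq_left, max_eq_right, h'] at * <;> assumption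
  · simpa using hG

set_option maxHeartbeats 4000000 in
lemma caseA1 (k l : ℕ) (hl : 5 ≤ l) :
    HasBergeCliqueUsing l (insert ({0, 1} : Finset ℕ) (C5edges k l)) ({0, 1} : Finset ℕ) := by
  apply build _ (Finset.range l) (Finset.card_range l)
    (by simp; omega) (by simp; omega) (by omega)
    (fun a b => if a = 0 ∧ b = 1 then ({0, 1} : Finset ℕ) else C5edge k l a b)
  · intro a ha b hb c hc d hd hab hcd h
    simp only [Finset.mem_range] at ha hb hc hd
    split_ifs at h <;>
      first
      | omega
      | exact absurd h (C5edge_ne_pair (by omega) (by omega)).symm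
      | exact absurd h.symm (C5edge_ne_pair (by omega) (by omega)).symm
      | exact absurd h (C5edge_ne_pair (by omega) (by omega))
      | exact absurd h.symm (C5edge_ne_pair (by omega) (by omega))
      | (obtain ⟨e1, e2⟩ :=
          C5edge_inj hl (by omega) (by omega) (by omega) (by omega) (by omega) (by omega) h
         omega)
  · intro a ha b hb hab
    simp only [Finset.mem_range] at ha hb
    split_ifs with h1 <;> refine ⟨?_, ?_, ?_⟩ <;>
      first
      | exact Finset.mem_insert_self _ _
      | exact Finset.mem_insert_of_mem (C5edge_mem_C5edges (by omega) (by omega) (by omega))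
      | (simp only [Finset.mem_insert, Finset.mem_singleton]; omega)
      | (rw [mem_C5edge_iff (by omega)]; omega)
  · norm_num


set_option maxHeartbeats 4000000 in
lemma caseA2 (k l y : ℕ) (hl : 5 ≤ l) (hy2 : 2 ≤ y) (hyl : y < l) :
    HasBergeCliqueUsing l (insert ({0, y} : Finset ℕ) (C5edges k l)) ({0, y} : Finset ℕ) := by
  have s1 := extraIdx_spec (show 0 < y by omega) (by omega)
  apply build _ (Finset.range l) (Finset.card_range l)
    (by simp; omega) (by simp; omega) (by omega)
    (fun a b => if a = 0 ∧ b = y then ({0, y} : Finset ℕ)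
      else if a = 0 ∧ b = 1 then C5edge k l 0 y else C5edge k l a b)
  · intro a ha b hb c hc d hd hab hcd h
    simp only [Finset.mem_range] at ha hb hc hd
    split_ifs at h <;>
      first
      | omega
      | exact absurd h (C5edge_ne_pair (by omega) (by omega))
      | exact absurd h.symm (C5edge_ne_pair (by omega) (by omega))
      | (obtain ⟨e1, e2⟩ :=
          C5edge_inj hl (by omega) (by omega) (by omega) (by omega) (by omega) (by omega) h
         omega)
  · intro a ha b hb hab
    simp only [Finset.mem_range] at ha hb
    split_ifs <;> refine ⟨?_, ?_, ?_⟩ <;>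
      first
      | exact Finset.mem_insert_self _ _
      | exact Finset.mem_insert_of_mem (C5edge_mem_C5edges (by omega) (by omega) (by omega))
      | (simp only [Finset.mem_insert, Finset.mem_singleton]; omega)
      | (rw [mem_C5edge_iff (by omega)]; omega)
  · rw [min_eq_left (by omega), max_eq_right (by omega)]
    simp

set_option maxHeartbeats 4000000 in
lemma caseA4 (k l x y : ℕ) (hl : 5 ≤ l) (hx2 : 2 ≤ x) (hxy : x < y) (hyl : y < l) :
    HasBergeCliqueUsing l (insert ({x, y} : Finset ℕ) (C5edges k l)) ({x, y} : Finset ℕ) := by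
  have s1 := extraIdx_spec (show 0 < x by omega) (by omega)
  have s2 := extraIdx_spec hxy (by omega)
  apply build _ (Finset.range l) (Finset.card_range l)
    (by simp; omega) (by simp; omega) (by omega)
    (fun a b => if a = x ∧ b = y then ({x, y} : Finset ℕ)
      else if a = 0 ∧ b = 1 then C5edge k l 0 x
      else if a = 0 ∧ b = x then C5edge k l x y else C5edge k l a b)
  · intro a ha b hb c hc d hd hab hcd h
    simp only [Finset.mem_range] at ha hb hc hd
    split_ifs at h <;>
      first
      | omega
      | exact absurd h (C5edge_ne_pair (by omega) (by omega))
      | exact absurd h.symm (C5edge_ne_pair (by omega) (by omega))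
      | (obtain ⟨e1, e2⟩ :=
          C5edge_inj hl (by omega) (by omega) (by omega) (by omega) (by omega) (by omega) h
         omega)
  · intro a ha b hb hab
    simp only [Finset.mem_range] at ha hb
    split_ifs <;> refine ⟨?_, ?_, ?_⟩ <;>
      first
      | exact Finset.mem_insert_self _ _
      | exact Finset.mem_insert_of_mem (C5edge_mem_C5edges (by omega) (by omega) (by omega))
      | (simp only [Finset.mem_insert, Finset.mem_singleton]; omega)
      | (rw [mem_C5edge_iff (by omega)]; omega)
  · rw [min_eq_left (by omega), max_eq_right (by omega)]
    simp [show ¬(x = 0 ∧ y = 1) by omega]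

set_option maxHeartbeats 4000000 in
lemma caseA3 (k l y : ℕ) (hl : 5 ≤ l) (hy2 : 2 ≤ y) (hyl : y < l) :
    HasBergeCliqueUsing l (insert ({1, y} : Finset ℕ) (C5edges k l)) ({1, y} : Finset ℕ) := by
  have s1 := extraIdx_spec (show 1 < y by omega) (by omega)
  obtain ⟨m, hm1, hm2⟩ : ∃ m, extraIdx 1 y = m ∧
      ((y = 2 ∧ m = 3) ∨ (y = 3 ∧ m = 4) ∨ (4 ≤ y ∧ m = 2)) :=
    ⟨extraIdx 1 y, rfl, by omega⟩
  have hmm : (min m y = m ∧ max m y = y) ∨ (min m y = y ∧ max m y = m) := by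
    rcases le_total m y with h | h
    · exact Or.inl ⟨min_eq_left h, max_eq_right h⟩
    · exact Or.inr ⟨min_eq_right h, max_eq_left h⟩
  have s2 := extraIdx_spec (show 0 < m by omega) (by omega)
  have s3 := extraIdx_spec (show min m y < max m y by omega) (by omega)
  apply build _ (Finset.range l) (Finset.card_range l)
    (by simp; omega) (by simp; omega) (by omega)
    (fun a b => if a = 1 ∧ b = y then ({1, y} : Finset ℕ)
      else if a = 0 ∧ b = 1 then C5edge k l 0 m
      else if a = 0 ∧ b = m then C5edge k l (min m y) (max m y)
      else if a = min m y ∧ b = max m y then C5edge k l 1 y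
      else C5edge k l a b)
  · intro a ha b hb c hc d hd hab hcd h
    simp only [Finset.mem_range] at ha hb hc hd
    split_ifs at h <;>
      first
      | omega
      | exact absurd h (C5edge_ne_pair (by omega) (by omega))
      | exact absurd h.symm (C5edge_ne_pair (by omega) (by omega))
      | (obtain ⟨e1, e2⟩ :=
          C5edge_inj hl (by omega) (by omega) (by omega) (by omega) (by omega) (by omega) h
         omega)
  · intro a ha b hb hab
    simp only [Finset.mem_range] at ha hb
    split_ifs <;> refine ⟨?_, ?_, ?_⟩ <;>
      first
      | exact Finset.mem_insert_self _ _
      | exact Finset.mem_insert_of_mem (C5edge_mem_C5edges (by omega) (by omega) (by omega))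
      | (simp only [Finset.mem_insert, Finset.mem_singleton]; omega)
      | (rw [mem_C5edge_iff (by omega)]; omega)
  · rw [min_eq_left (by omega), max_eq_right (by omega)]
    simp [show ¬(0 = 1 ∧ y = y) by omega]


set_option maxHeartbeats 4000000 in
lemma caseB1a (k l y : ℕ) (hl : 5 ≤ l) (hly : l ≤ y) (hy : y < l + (k - 3)) :
    HasBergeCliqueUsing l (insert ({0, y} : Finset ℕ) (C5edges k l)) ({0, y} : Finset ℕ) := by
  apply build _ (insert y ((Finset.range l).erase 1))
    (by rw [Finset.card_insert_of_notMem (by simp; omega),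
            Finset.card_erase_of_mem (by simp; omega), Finset.card_range]; omega)
    (by simp; omega) (by simp) (by omega)
    (fun a b => if b = y then (if a = 0 then ({0, y} : Finset ℕ) else C5edge k l 1 a)
      else C5edge k l a b)
  · intro a ha b hb c hc d hd hab hcd h
    simp only [Finset.mem_insert, Finset.mem_erase, Finset.mem_range] at ha hb hc hd
    split_ifs at h <;>
      first
      | omega
      | exact absurd h (C5edge_ne_pair (by omega) (by omega))
      | exact absurd h.symm (C5edge_ne_pair (by omega) (by omega))
      | (obtain ⟨e1, e2⟩ :=
          C5edge_inj hl (by omega) (by omega) (by omega) (by omega) (by omega) (by omega) h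
         omega)
  · intro a ha b hb hab
    simp only [Finset.mem_insert, Finset.mem_erase, Finset.mem_range] at ha hb
    split_ifs <;> refine ⟨?_, ?_, ?_⟩ <;>
      first
      | exact Finset.mem_insert_self _ _
      | exact Finset.mem_insert_of_mem (C5edge_mem_C5edges (by omega) (by omega) (by omega))
      | (simp only [Finset.mem_insert, Finset.mem_singleton]; omega)
      | exact mem_C5edge_D _ _ (by omega) (by omega)
      | (rw [mem_C5edge_iff (by omega)]; omega)
  · rw [min_eq_left (by omega), max_eq_right (by omega)]
    simp

set_option maxHeartbeats 4000000 in
lemma caseB1b (k l x y : ℕ) (hl : 5 ≤ l) (hx1 : 1 ≤ x) (hxl : x < l) (hly : l ≤ y)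
    (hy : y < l + (k - 3)) :
    HasBergeCliqueUsing l (insert ({x, y} : Finset ℕ) (C5edges k l)) ({x, y} : Finset ℕ) := by
  have s1 : x = 1 ∨ (2 ≤ x ∧ extraIdx 0 x = 1) := by
    rcases Nat.lt_or_ge x 2 with h | h
    · exact Or.inl (by omega)
    · have := extraIdx_spec (show 0 < x by omega) (by omega); omega
  apply build _ (insert y ((Finset.range l).erase 0))
    (by rw [Finset.card_insert_of_notMem (by simp; omega),
            Finset.card_erase_of_mem (by simp; omega), Finset.card_range]; omega)
    (by simp; omega) (by simp) (by omega)
    (fun a b => if b = y then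
        (if a = x then ({x, y} : Finset ℕ)
         else if a = 1 then C5edge k l 0 x else C5edge k l 0 a)
      else C5edge k l a b)
  · intro a ha b hb c hc d hd hab hcd h
    simp only [Finset.mem_insert, Finset.mem_erase, Finset.mem_range] at ha hb hc hd
    split_ifs at h <;>
      first
      | omega
      | exact absurd h (C5edge_ne_pair (by omega) (by omega))
      | exact absurd h.symm (C5edge_ne_pair (by omega) (by omega))
      | (obtain ⟨e1, e2⟩ :=
          C5edge_inj hl (by omega) (by omega) (by omega) (by omega) (by omega) (by omega) h
         omega)
  · intro a ha b hb hab
    simp only [Finset.mem_insert, Finset.mem_erase, Finset.mem_range] at ha hb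
    split_ifs <;> refine ⟨?_, ?_, ?_⟩ <;>
      first
      | exact Finset.mem_insert_self _ _
      | exact Finset.mem_insert_of_mem (C5edge_mem_C5edges (by omega) (by omega) (by omega))
      | (simp only [Finset.mem_insert, Finset.mem_singleton]; omega)
      | exact mem_C5edge_D _ _ (by omega) (by omega)
      | (rw [mem_C5edge_iff (by omega)]; omega)
  · rw [min_eq_left (by omega), max_eq_right (by omega)]
    simp

set_option maxHeartbeats 4000000 in
lemma caseB2 (k l x y : ℕ) (hl : 5 ≤ l) (hlx : l ≤ x) (hxy : x < y)
    (hy : y < l + (k - 3)) :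
    HasBergeCliqueUsing l (insert ({x, y} : Finset ℕ) (C5edges k l)) ({x, y} : Finset ℕ) := by
  apply build _ (insert x (insert y (((Finset.range l).erase 0).erase 1)))
    (by rw [Finset.card_insert_of_notMem (by simp; omega),
            Finset.card_insert_of_notMem (by simp; omega),
            Finset.card_erase_of_mem (by simp; omega),
            Finset.card_erase_of_mem (by simp; omega), Finset.card_range]; omega)
    (by simp) (by simp) (by omega)
    (fun a b => if b = y then
        (if a = x then ({x, y} : Finset ℕ) else C5edge k l 1 a)
      else if b = x then C5edge k l 0 a
      else C5edge k l a b)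
  · intro a ha b hb c hc d hd hab hcd h
    simp only [Finset.mem_insert, Finset.mem_erase, Finset.mem_range] at ha hb hc hd
    split_ifs at h <;>
      first
      | omega
      | exact absurd h (C5edge_ne_pair (by omega) (by omega))
      | exact absurd h.symm (C5edge_ne_pair (by omega) (by omega))
      | (obtain ⟨e1, e2⟩ :=
          C5edge_inj hl (by omega) (by omega) (by omega) (by omega) (by omega) (by omega) h
         omega)
  · intro a ha b hb hab
    simp only [Finset.mem_insert, Finset.mem_erase, Finset.mem_range] at ha hb
    split_ifs <;> refine ⟨?_, ?_, ?_⟩ <;>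
      first
      | exact Finset.mem_insert_self _ _
      | exact Finset.mem_insert_of_mem (C5edge_mem_C5edges (by omega) (by omega) (by omega))
      | (simp only [Finset.mem_insert, Finset.mem_singleton]; omega)
      | exact mem_C5edge_D _ _ (by omega) (by omega)
      | (rw [mem_C5edge_iff (by omega)]; omega)
  · rw [min_eq_left (by omega), max_eq_right (by omega)]
    simp

lemma auxmain (k l x y : ℕ) (hl : 5 ≤ l) (hx : x < l + (k - 3)) (hy : y < l + (k - 3))
    (hxy : x < y) :
    HasBergeCliqueUsing l (insert ({x, y} : Finset ℕ) (C5edges k l)) ({x, y} : Finset ℕ) := by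
  by_cases hyl : y < l
  · by_cases hx0 : x = 0
    · subst hx0
      by_cases hy1 : y = 1
      · subst hy1; exact caseA1 k l hl
      · exact caseA2 k l y hl (by omega) hyl
    · by_cases hx1 : x = 1
      · subst hx1; exact caseA3 k l y hl (by omega) hyl
      · exact caseA4 k l x y hl (by omega) hxy hyl
  · by_cases hxl : x < l
    · by_cases hx0 : x = 0
      · subst hx0; exact caseB1a k l y hl (by omega) hy
      · exact caseB1b k l x y hl (by omega) hxl (by omega) hy
    · exact caseB2 k l x y hl (by omega) hxy hy

/-- for `k ≥ 3`, `ℓ ≥ 5`, every pair of distinct vertices of `C(k,ℓ)` is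
ℓ-good: adding the 2-element edge `{x,y}` creates a Berge-`K_ℓ` using `{x,y}`. -/
theorem stmt5 (k l : ℕ) (hk : 3 ≤ k) (hl : 5 ≤ l) (x y : ℕ)
    (hx : x ∈ C5verts k l) (hy : y ∈ C5verts k l) (hxy : x ≠ y) :
    HasBergeCliqueUsing l (insert ({x, y} : Finset ℕ) (C5edges k l)) {x, y} := by
  simp only [C5verts, Finset.mem_range] at hx hy
  rcases Nat.lt_or_ge x y with h | h
  · exact auxmain k l x y hl hx hy h
  · rw [Finset.pair_comm]
    exact auxmain k l y x hl hy hx (by omega)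
end

section
/- Fix k ≥ 3 and ℓ ≥ 4. The hypergraph S(n,k,ℓ) of Construction contains no Berge-K_ℓ. Specifically: the vertex v has only ℓ − 2 neighbors of degree at least ℓ − 1, so v cannot be a core vertex of a Berge-K_ℓ; any Berge-K_ℓ would have all core vertices in V(C(k,ℓ)), but only binom(ℓ,2) − 1 hyperedges of S contain at least two vertices of V(C(k,ℓ)), which is fewer than the binom(ℓ,2) hyperedges needed. -/
/-- The hyperedges of `C(k,l)`: the tight-cycle construction when `l = 4`, and the
`K_l − c₁c₂` extension construction when `l ≥ 5`. -/
def Cedges (k l : ℕ) : Finset (Finset ℕ) := if l = 4 then C4edges k else C5edges k l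

/-- The vertex set of `C(k,l)`, of size `k+2` when `l = 4` and `l + k − 3` otherwise. -/
def Cverts (k l : ℕ) : Finset ℕ :=
  Finset.range (if l = 4 then k + 2 else l + (k - 3))

lemma filter_lt_card (s : Finset ℕ) :
    ((s ×ˢ s).filter fun p => p.1 < p.2).card * 2 = s.card * s.card - s.card := by
  have he : (s ×ˢ s).filter (fun p => p.1 < p.2) ∪ (s ×ˢ s).filter (fun p => p.2 < p.1)
      = s.offDiag := by
    ext p
    simp only [Finset.mem_union, Finset.mem_filter, Finset.mem_product, Finset.mem_offDiag]
    constructor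
    · rintro (⟨⟨h1, h2⟩, h3⟩ | ⟨⟨h1, h2⟩, h3⟩) <;> exact ⟨h1, h2, by omega⟩
    · rintro ⟨h1, h2, h3⟩
      rcases Nat.lt_or_ge p.1 p.2 with h | h
      · exact Or.inl ⟨⟨h1, h2⟩, h⟩
      · exact Or.inr ⟨⟨h1, h2⟩, by omega⟩
  have hd : Disjoint ((s ×ˢ s).filter (fun p => p.1 < p.2))
      ((s ×ˢ s).filter (fun p => p.2 < p.1)) := by
    rw [Finset.disjoint_left]
    intro p hp hq
    simp only [Finset.mem_filter] at hp hq
    omega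
  have hb : ((s ×ˢ s).filter (fun p => p.1 < p.2)).card
      = ((s ×ˢ s).filter (fun p => p.2 < p.1)).card := by
    apply Finset.card_bij' (fun p _ => (p.2, p.1)) (fun p _ => (p.2, p.1)) <;>
      simp only [Finset.mem_filter, Finset.mem_product, Prod.forall] <;>
      intro a b h <;> tauto
  have hu := Finset.card_union_of_disjoint hd
  rw [he, Finset.offDiag_card] at hu
  omega

lemma extraIdx_le (i j : ℕ) : extraIdx i j ≤ 4 := by
  unfold extraIdx
  split_ifs <;> omega

lemma Cedges_subset_verts {k l : ℕ} (hk : 3 ≤ k) (hl : 4 ≤ l) :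
    ∀ e ∈ Cedges k l, e ⊆ Cverts k l := by
  intro e he x hx
  by_cases h4 : l = 4
  · simp only [Cedges, if_pos h4] at he
    simp only [Cverts, if_pos h4, Finset.mem_range]
    rw [C4edges, Finset.mem_image] at he
    obtain ⟨i, hi, rfl⟩ := he
    rw [Finset.mem_range] at hi
    simp only [Finset.mem_union, Finset.mem_insert, Finset.mem_singleton,
      Finset.mem_Ico] at hx
    have h1 : (i+1) % 5 < 5 := Nat.mod_lt _ (by omega)
    have h2 : (i+2) % 5 < 5 := Nat.mod_lt _ (by omega)
    omega
  · simp only [Cedges, if_neg h4] at he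
    simp only [Cverts, if_neg h4, Finset.mem_range]
    rw [C5edges, Finset.mem_image] at he
    obtain ⟨p, hp, rfl⟩ := he
    rw [Finset.mem_filter, Finset.mem_product, Finset.mem_range, Finset.mem_range] at hp
    rw [C5edge] at hx
    simp only [Finset.mem_union, Finset.mem_insert, Finset.mem_singleton,
      Finset.mem_Ico] at hx
    have := extraIdx_le p.1 p.2
    omega

/-- the construction `S(n,k,ℓ)` (edges of `C(k,ℓ)` together with
`Aᵢ ∪ {cⱼ}` and `Bᵢ ∪ {v, cⱼ}`) contains no Berge-`K_ℓ`. -/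
theorem stmt9 (k l a b : ℕ) (hk : 3 ≤ k) (hl : 4 ≤ l)
    (c : Fin (l - 2) → ℕ) (hc : Function.Injective c) (hcV : ∀ j, c j ∈ Cverts k l)
    (v : ℕ) (hv : v ∉ Cverts k l)
    (A : Fin a → Finset ℕ) (B : Fin b → Finset ℕ)
    (hA : ∀ i, (A i).card = k - 1) (hB : ∀ i, (B i).card = k - 2)
    (hAV : ∀ i, Disjoint (A i) (Cverts k l)) (hBV : ∀ i, Disjoint (B i) (Cverts k l))
    (hAv : ∀ i, v ∉ A i) (hBv : ∀ i, v ∉ B i)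
    (hAA : ∀ i j, i ≠ j → Disjoint (A i) (A j))
    (hBB : ∀ i j, i ≠ j → Disjoint (B i) (B j))
    (hAB : ∀ i j, Disjoint (A i) (B j)) :
    ¬ HasBergeClique l
      (Cedges k l
        ∪ Finset.image (fun p : Fin a × Fin (l - 2) => A p.1 ∪ {c p.2}) Finset.univ
        ∪ Finset.image (fun p : Fin b × Fin (l - 2) => B p.1 ∪ {v, c p.2})
            Finset.univ) := by
  rintro ⟨core, hcard, φ, hinj, hmem⟩
  have hEsub := Cedges_subset_verts (k := k) (l := l) hk hl
  -- classification of assigned edges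
  have hclass : ∀ x ∈ core, ∀ y ∈ core, x ≠ y →
      (φ s(x, y) ∈ Cedges k l ∨ (∃ i j, φ s(x, y) = A i ∪ {c j})
        ∨ ∃ i j, φ s(x, y) = B i ∪ {v, c j}) ∧ x ∈ φ s(x, y) ∧ y ∈ φ s(x, y) := by
    intro x hx y hy hxy
    obtain ⟨he, hxe, hye⟩ := hmem x hx y hy hxy
    refine ⟨?_, hxe, hye⟩
    simp only [Finset.mem_union, Finset.mem_image, Finset.mem_univ, true_and] at he
    rcases he with (he | ⟨p, hp⟩) | ⟨p, hp⟩
    · exact Or.inl he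
    · exact Or.inr (Or.inl ⟨p.1, p.2, hp.symm⟩)
    · exact Or.inr (Or.inr ⟨p.1, p.2, hp.symm⟩)
  have hyy : ∀ x y y' : ℕ, y ≠ x → y' ≠ x → s(x, y) = s(x, y') → y = y' := by
    intro x y y' h1 h2 h
    rw [Sym2.eq_iff] at h
    tauto
  -- no core vertex lies in any A i
  have hAcore : ∀ x ∈ core, ∀ i, x ∉ A i := by
    intro x hx i hxA
    have hxV : x ∉ Cverts k l := Finset.disjoint_left.mp (hAV i) hxA
    have key : ∀ y ∈ core.erase x,
        φ s(x, y) ∈ (Finset.univ : Finset (Fin (l - 2))).image (fun j => A i ∪ {c j}) := by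
      intro y hy
      rw [Finset.mem_erase] at hy
      obtain ⟨hcls, hxe, _⟩ := hclass x hx y hy.2 (fun h => hy.1 h.symm)
      rcases hcls with he | ⟨i', j, he⟩ | ⟨i', j, he⟩
      · exact absurd (hEsub _ he hxe) hxV
      · rw [he] at hxe
        rcases Finset.mem_union.mp hxe with h | h
        · have hii : i' = i := by
            by_contra hne
            exact Finset.disjoint_left.mp (hAA i' i hne) h hxA
          subst hii
          rw [Finset.mem_image]
          exact ⟨j, Finset.mem_univ j, he.symm⟩
        · rw [Finset.mem_singleton] at h
          exact absurd (h ▸ hcV j) hxV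
      · rw [he] at hxe
        rcases Finset.mem_union.mp hxe with h | h
        · exact absurd hxA (Finset.disjoint_right.mp (hAB i i') h)
        · rcases Finset.mem_insert.mp h with h | h
          · exact absurd (h ▸ hxA) (hAv i)
          · rw [Finset.mem_singleton] at h
            exact absurd (h ▸ hcV j) hxV
    have hinj2 : Set.InjOn (fun y => φ s(x, y)) (core.erase x) := by
      intro y hy y' hy' hEq
      rw [Finset.mem_coe, Finset.mem_erase] at hy hy'
      exact hyy x y y' hy.1 hy'.1
        (hinj ⟨x, hx, y, hy.2, fun h => hy.1 h.symm, rfl⟩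
          ⟨x, hx, y', hy'.2, fun h => hy'.1 h.symm, rfl⟩ hEq)
    have hle := Finset.card_le_card_of_injOn _ key hinj2
    rw [Finset.card_erase_of_mem hx, hcard] at hle
    have h2 := Finset.card_image_le (s := (Finset.univ : Finset (Fin (l - 2))))
      (f := fun j => A i ∪ {c j})
    rw [Finset.card_univ, Fintype.card_fin] at h2
    omega
  -- no core vertex lies in any B i
  have hBcore : ∀ x ∈ core, ∀ i, x ∉ B i := by
    intro x hx i hxB
    have hxV : x ∉ Cverts k l := Finset.disjoint_left.mp (hBV i) hxB
    have key : ∀ y ∈ core.erase x,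
        φ s(x, y) ∈ (Finset.univ : Finset (Fin (l - 2))).image (fun j => B i ∪ {v, c j}) := by
      intro y hy
      rw [Finset.mem_erase] at hy
      obtain ⟨hcls, hxe, _⟩ := hclass x hx y hy.2 (fun h => hy.1 h.symm)
      rcases hcls with he | ⟨i', j, he⟩ | ⟨i', j, he⟩
      · exact absurd (hEsub _ he hxe) hxV
      · rw [he] at hxe
        rcases Finset.mem_union.mp hxe with h | h
        · exact absurd hxB (Finset.disjoint_left.mp (hAB i' i) h)
        · rw [Finset.mem_singleton] at h
          exact absurd (h ▸ hcV j) hxV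
      · rw [he] at hxe
        rcases Finset.mem_union.mp hxe with h | h
        · have hii : i' = i := by
            by_contra hne
            exact Finset.disjoint_left.mp (hBB i' i hne) h hxB
          subst hii
          rw [Finset.mem_image]
          exact ⟨j, Finset.mem_univ j, he.symm⟩
        · rcases Finset.mem_insert.mp h with h | h
          · exact absurd (h ▸ hxB) (hBv i)
          · rw [Finset.mem_singleton] at h
            exact absurd (h ▸ hcV j) hxV
    have hinj2 : Set.InjOn (fun y => φ s(x, y)) (core.erase x) := by
      intro y hy y' hy' hEq
      rw [Finset.mem_coe, Finset.mem_erase] at hy hy'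
      exact hyy x y y' hy.1 hy'.1
        (hinj ⟨x, hx, y, hy.2, fun h => hy.1 h.symm, rfl⟩
          ⟨x, hx, y', hy'.2, fun h => hy'.1 h.symm, rfl⟩ hEq)
    have hle := Finset.card_le_card_of_injOn _ key hinj2
    rw [Finset.card_erase_of_mem hx, hcard] at hle
    have h2 := Finset.card_image_le (s := (Finset.univ : Finset (Fin (l - 2))))
      (f := fun j => B i ∪ {v, c j})
    rw [Finset.card_univ, Fintype.card_fin] at h2
    omega
  -- v is not a core vertex
  have hvcore : v ∉ core := by
    intro hvc
    have key : core.erase v ⊆ Finset.image c Finset.univ := by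
      intro y hy
      rw [Finset.mem_erase] at hy
      obtain ⟨hcls, hve, hye⟩ := hclass v hvc y hy.2 (fun h => hy.1 h.symm)
      rcases hcls with he | ⟨i, j, he⟩ | ⟨i, j, he⟩
      · exact absurd (hEsub _ he hve) hv
      · rw [he] at hve
        rcases Finset.mem_union.mp hve with h | h
        · exact absurd h (hAv i)
        · rw [Finset.mem_singleton] at h
          exact absurd (h ▸ hcV j) hv
      · rw [he] at hye
        rcases Finset.mem_union.mp hye with h | h
        · exact absurd h (hBcore y hy.2 i)
        · rcases Finset.mem_insert.mp h with h | h
          · exact absurd h hy.1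
          · rw [Finset.mem_singleton] at h
            rw [Finset.mem_image]
            exact ⟨j, Finset.mem_univ j, h.symm⟩
    have hle := Finset.card_le_card key
    rw [Finset.card_erase_of_mem hvc, hcard] at hle
    have h2 := Finset.card_image_le (s := (Finset.univ : Finset (Fin (l - 2)))) (f := c)
    rw [Finset.card_univ, Fintype.card_fin] at h2
    omega
  -- all core vertices lie in Cverts
  have hcoreV : ∀ x ∈ core, x ∈ Cverts k l := by
    intro x hx
    obtain ⟨y, hy, hyx⟩ := Finset.exists_mem_ne (by omega : 1 < core.card) x
    obtain ⟨hcls, hxe, _⟩ := hclass x hx y hy (fun h => hyx h.symm)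
    rcases hcls with he | ⟨i, j, he⟩ | ⟨i, j, he⟩
    · exact hEsub _ he hxe
    · rw [he] at hxe
      rcases Finset.mem_union.mp hxe with h | h
      · exact absurd h (hAcore x hx i)
      · rw [Finset.mem_singleton] at h
        exact h ▸ hcV j
    · rw [he] at hxe
      rcases Finset.mem_union.mp hxe with h | h
      · exact absurd h (hBcore x hx i)
      · rcases Finset.mem_insert.mp h with h | h
        · exact absurd (h ▸ hx) hvcore
        · rw [Finset.mem_singleton] at h
          exact h ▸ hcV j
  -- every assigned edge is a Cedge
  have hCe : ∀ x ∈ core, ∀ y ∈ core, x ≠ y → φ s(x, y) ∈ Cedges k l := by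
    intro x hx y hy hxy
    obtain ⟨hcls, hxe, hye⟩ := hclass x hx y hy hxy
    rcases hcls with he | ⟨i, j, he⟩ | ⟨i, j, he⟩
    · exact he
    · rw [he] at hxe hye
      have hxc : x = c j := by
        rcases Finset.mem_union.mp hxe with h | h
        · exact absurd (hcoreV x hx) (Finset.disjoint_left.mp (hAV i) h)
        · exact Finset.mem_singleton.mp h
      have hyc : y = c j := by
        rcases Finset.mem_union.mp hye with h | h
        · exact absurd (hcoreV y hy) (Finset.disjoint_left.mp (hAV i) h)
        · exact Finset.mem_singleton.mp h
      exact absurd (hxc.trans hyc.symm) hxy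
    · rw [he] at hxe hye
      have hxc : x = c j := by
        rcases Finset.mem_union.mp hxe with h | h
        · exact absurd (hcoreV x hx) (Finset.disjoint_left.mp (hBV i) h)
        · rcases Finset.mem_insert.mp h with h | h
          · exact absurd (h ▸ hcoreV x hx) hv
          · exact Finset.mem_singleton.mp h
      have hyc : y = c j := by
        rcases Finset.mem_union.mp hye with h | h
        · exact absurd (hcoreV y hy) (Finset.disjoint_left.mp (hBV i) h)
        · rcases Finset.mem_insert.mp h with h | h
          · exact absurd (h ▸ hcoreV y hy) hv
          · exact Finset.mem_singleton.mp h
      exact absurd (hxc.trans hyc.symm) hxy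
  -- counting
  have hT := filter_lt_card core
  rw [hcard] at hT
  set T := (core ×ˢ core).filter (fun p => p.1 < p.2) with hTdef
  have hmaps : ∀ p ∈ T, φ s(p.1, p.2) ∈ Cedges k l := by
    intro p hp
    rw [hTdef, Finset.mem_filter, Finset.mem_product] at hp
    exact hCe p.1 hp.1.1 p.2 hp.1.2 (Nat.ne_of_lt hp.2)
  have hinjT : Set.InjOn (fun p : ℕ × ℕ => φ s(p.1, p.2)) T := by
    intro p hp q hq hEq
    rw [Finset.mem_coe, hTdef, Finset.mem_filter, Finset.mem_product] at hp hq
    obtain ⟨⟨hp1, hp2⟩, hplt⟩ := hp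
    obtain ⟨⟨hq1, hq2⟩, hqlt⟩ := hq
    have hS := hinj ⟨p.1, hp1, p.2, hp2, Nat.ne_of_lt hplt, rfl⟩
      ⟨q.1, hq1, q.2, hq2, Nat.ne_of_lt hqlt, rfl⟩ hEq
    rw [Sym2.eq_iff] at hS
    have h12 : p.1 = q.1 ∧ p.2 = q.2 := by omega
    exact Prod.ext h12.1 h12.2
  have hle := Finset.card_le_card_of_injOn _ hmaps hinjT
  by_cases h4 : l = 4
  · subst h4
    have hC : (Cedges k 4).card ≤ 5 := by
      have hEq : Cedges k 4 = C4edges k := by simp [Cedges]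
      rw [hEq, C4edges]
      calc ((Finset.range 5).image _).card ≤ (Finset.range 5).card := Finset.card_image_le
        _ = 5 := Finset.card_range 5
    omega
  · have hl5 : 5 ≤ l := by omega
    have hG := filter_lt_card (Finset.range l)
    rw [Finset.card_range] at hG
    set G := ((Finset.range l ×ˢ Finset.range l).filter fun p => p.1 < p.2) with hGdef
    have h01 : ((0, 1) : ℕ × ℕ) ∈ G := by
      rw [hGdef, Finset.mem_filter, Finset.mem_product]
      exact ⟨⟨Finset.mem_range.mpr (by omega), Finset.mem_range.mpr (by omega)⟩, by omega⟩
    have hFG : ((Finset.range l ×ˢ Finset.range l).filter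
        fun p => p.1 < p.2 ∧ ¬(p.1 = 0 ∧ p.2 = 1)) = G.erase (0, 1) := by
      rw [hGdef]
      ext p
      simp only [Finset.mem_filter, Finset.mem_erase, Finset.mem_product, Ne,
        Prod.ext_iff]
      tauto
    have hCcard : (Cedges k l).card ≤ G.card - 1 := by
      have hEq : Cedges k l = C5edges k l := by simp [Cedges, h4]
      rw [hEq, C5edges]
      calc (Finset.image _ _).card
          ≤ (((Finset.range l ×ˢ Finset.range l)).filter
              fun p => p.1 < p.2 ∧ ¬(p.1 = 0 ∧ p.2 = 1)).card := Finset.card_image_le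
        _ = (G.erase (0, 1)).card := by rw [hFG]
        _ = G.card - 1 := Finset.card_erase_of_mem h01
    have hTG : T.card = G.card := by omega
    have h4l : l * 4 ≤ l * l := Nat.mul_le_mul_left l (by omega)
    set m := l * l with hm
    omega
end

section
/- For all k ≥ 2 and ℓ ≥ 3, sat_k(n, Berge-K_ℓ) ≥ (1 + o(1))·((ℓ−2)/(k−1))·n as n → ∞. That is, for every ε > 0 there exists N such that for all n ≥ N, every Berge-K_ℓ-saturated k-uniform hypergraph on n vertices has at least (1−ε)·((ℓ−2)/(k−1))·n hyperedges. -/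
namespace Stmt12Aux

variable {n : ℕ}

def nbr (H : Finset (Finset (Fin n))) (v : Fin n) : Finset (Fin n) :=
  (H.filter (fun h => v ∈ h)).biUnion (fun h => h.erase v)

lemma mem_nbr {H : Finset (Finset (Fin n))} {v z : Fin n} :
    z ∈ nbr H v ↔ ∃ h ∈ H, v ∈ h ∧ z ∈ h ∧ z ≠ v := by
  constructor
  · intro hz
    obtain ⟨h, hh, hz⟩ := Finset.mem_biUnion.mp hz
    obtain ⟨hH, hv⟩ := Finset.mem_filter.mp hh
    exact ⟨h, hH, hv, Finset.mem_of_mem_erase hz, Finset.ne_of_mem_erase hz⟩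
  · rintro ⟨h, hH, hv, hzh, hzv⟩
    exact Finset.mem_biUnion.mpr ⟨h, Finset.mem_filter.mpr ⟨hH, hv⟩,
      Finset.mem_erase.mpr ⟨hzv, hzh⟩⟩

def chargeTo (H : Finset (Finset (Fin n))) (a : ℕ) (v : Fin n) (T : Finset (Fin n)) : Prop :=
  ∃ E ∈ H.powerset, E.card = a ∧ ∀ h ∈ E, v ∈ h ∧ (h ∩ T).Nonempty

lemma chargeTo_mono {H : Finset (Finset (Fin n))} {a : ℕ} {v : Fin n}
    {T T' : Finset (Fin n)} (hTT : T ⊆ T') (h : chargeTo H a v T) :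
    chargeTo H a v T' := by
  obtain ⟨E, hE, hcard, hall⟩ := h
  exact ⟨E, hE, hcard, fun h hh => ⟨(hall h hh).1,
    ((hall h hh).2).mono (Finset.inter_subset_inter (le_refl h) hTT)⟩⟩

def blk (H : Finset (Finset (Fin n))) (a : ℕ) (x y : Fin n) : Prop :=
  chargeTo H a x (nbr H y)

lemma blk_of_map {l : ℕ} {H : Finset (Finset (Fin n))} {e : Finset (Fin n)}
    {core : Finset (Fin n)} {φ : Sym2 (Fin n) → Finset (Fin n)}
    (hcard : core.card = l)
    (hmap : BergeCliqueMap (insert e H) core φ)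
    {x y : Fin n} (hx : x ∈ core) (hy : y ∈ core) (hxy : x ≠ y)
    (hφ : φ s(x, y) = e) : blk H (l - 2) x y := by
  obtain ⟨hinj, hpair⟩ := hmap
  have hmemD : ∀ {a b : Fin n}, a ∈ core → b ∈ core → a ≠ b →
      s(a, b) ∈ {p : Sym2 (Fin n) | ∃ x ∈ core, ∃ y ∈ core, x ≠ y ∧ p = s(x, y)} :=
    fun ha hb hab => ⟨_, ha, _, hb, hab, rfl⟩
  have hzmem : ∀ {z : Fin n}, z ∈ core \ {x, y} → z ∈ core ∧ z ≠ x ∧ z ≠ y := by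
    intro z hz
    obtain ⟨h1, h2⟩ := Finset.mem_sdiff.mp hz
    simp only [Finset.mem_insert, Finset.mem_singleton, not_or] at h2
    exact ⟨h1, h2.1, h2.2⟩
  have hedge : ∀ {a b : Fin n}, a ∈ core → b ∈ core → a ≠ b → s(a, b) ≠ s(x, y) →
      φ s(a, b) ∈ H := by
    intro a b ha hb hab hne
    have h1 := (hpair a ha b hb hab).1
    rcases Finset.mem_insert.mp h1 with h | h
    · exact absurd (hinj (hmemD ha hb hab) (hmemD hx hy hxy) (h.trans hφ.symm)) hne
    · exact h
  refine ⟨(core \ {x, y}).image (fun z => φ s(x, z)), Finset.mem_powerset.mpr ?_, ?_, ?_⟩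
  · intro h hh
    obtain ⟨z, hz, rfl⟩ := Finset.mem_image.mp hh
    obtain ⟨hzc, hzx, hzy⟩ := hzmem hz
    refine hedge hx hzc hzx.symm ?_
    intro heq
    rcases Sym2.eq_iff.mp heq with ⟨_, h2⟩ | ⟨h1, _⟩
    · exact hzy h2
    · exact hxy h1
  · rw [Finset.card_image_of_injOn, Finset.card_sdiff_of_subset, hcard]
    · have : ({x, y} : Finset (Fin n)).card = 2 := by
        rw [Finset.card_insert_of_notMem (Finset.notMem_singleton.mpr hxy),
          Finset.card_singleton]
      rw [this]
    · intro z hz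
      simp only [Finset.mem_insert, Finset.mem_singleton] at hz
      rcases hz with rfl | hz
      · exact hx
      · exact hz ▸ hy
    · intro z1 hz1 z2 hz2 heq
      obtain ⟨hz1c, hz1x, _⟩ := hzmem hz1
      obtain ⟨hz2c, hz2x, _⟩ := hzmem hz2
      have := hinj (hmemD hx hz1c hz1x.symm) (hmemD hx hz2c hz2x.symm) heq
      rcases Sym2.eq_iff.mp this with ⟨_, h2⟩ | ⟨_, h2⟩
      · exact h2
      · exact absurd h2 hz1x
  · intro h hh
    obtain ⟨z, hz, rfl⟩ := Finset.mem_image.mp hh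
    obtain ⟨hzc, hzx, hzy⟩ := hzmem hz
    have hp := hpair x hx z hzc hzx.symm
    refine ⟨hp.2.1, z, Finset.mem_inter.mpr ⟨hp.2.2, ?_⟩⟩
    have hyz : φ s(y, z) ∈ H := by
      refine hedge hy hzc hzy.symm ?_
      intro heq
      rcases Sym2.eq_iff.mp heq with ⟨h1, _⟩ | ⟨_, h2⟩
      · exact hxy h1.symm
      · exact hzx h2
    have hp2 := hpair y hy z hzc hzy.symm
    exact mem_nbr.mpr ⟨φ s(y, z), hyz, hp2.2.1, hp2.2.2, hzy⟩

lemma pair_of_sat {l : ℕ} {H : Finset (Finset (Fin n))} {e : Finset (Fin n)}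
    (hfree : ¬ HasBergeClique l H) (hins : HasBergeClique l (insert e H)) :
    ∃ x ∈ e, ∃ y ∈ e, x ≠ y ∧ blk H (l - 2) x y ∧ blk H (l - 2) y x := by
  obtain ⟨core, hcard, φ, hmap⟩ := hins
  by_cases hcase : ∃ x ∈ core, ∃ y ∈ core, x ≠ y ∧ φ s(x, y) = e
  · obtain ⟨x, hx, y, hy, hxy, hφ⟩ := hcase
    have h1 := hmap.2 x hx y hy hxy
    have hφ' : φ s(y, x) = e := by rw [Sym2.eq_swap]; exact hφ
    exact ⟨x, hφ ▸ h1.2.1, y, hφ ▸ h1.2.2, hxy,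
      blk_of_map hcard hmap hx hy hxy hφ,
      blk_of_map hcard hmap hy hx hxy.symm hφ'⟩
  · exfalso
    apply hfree
    push_neg at hcase
    refine ⟨core, hcard, φ, hmap.1, ?_⟩
    intro a ha b hb hab
    have h := hmap.2 a ha b hb hab
    refine ⟨?_, h.2.1, h.2.2⟩
    rcases Finset.mem_insert.mp h.1 with h' | h'
    · exact absurd h' (hcase a ha b hb hab)
    · exact h'

lemma count_lemma {H : Finset (Finset (Fin n))} {k a : ℕ}
    (hU : ∀ h ∈ H, h.card = k) (W T : Finset (Fin n))
    (hdis : ∀ w ∈ W, w ∉ T)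
    (hch : ∀ w ∈ W, chargeTo H a w T) :
    a * W.card ≤ (k - 1) * H.card := by
  classical
  have step1 : ∀ w ∈ W, a ≤ (H.filter (fun h => w ∈ h ∧ (h ∩ T).Nonempty)).card := by
    intro w hw
    obtain ⟨E, hEp, hEcard, hall⟩ := hch w hw
    rw [← hEcard]
    apply Finset.card_le_card
    intro h hh
    exact Finset.mem_filter.mpr ⟨Finset.mem_powerset.mp hEp hh, hall h hh⟩
  have step2 : ∀ h ∈ H, (W.filter (fun w => w ∈ h ∧ (h ∩ T).Nonempty)).card ≤ k - 1 := by
    intro h hh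
    by_cases hne : (h ∩ T).Nonempty
    · obtain ⟨t, ht⟩ := hne
      have htT : t ∈ T := (Finset.mem_inter.mp ht).2
      have hth : t ∈ h := (Finset.mem_inter.mp ht).1
      have hsub : (W.filter (fun w => w ∈ h ∧ (h ∩ T).Nonempty)) ⊆ h.erase t := by
        intro w hw
        obtain ⟨hwW, hwh, _⟩ := Finset.mem_filter.mp hw
        exact Finset.mem_erase.mpr ⟨fun hwt => hdis w hwW (hwt ▸ htT), hwh⟩
      calc (W.filter (fun w => w ∈ h ∧ (h ∩ T).Nonempty)).card
          ≤ (h.erase t).card := Finset.card_le_card hsub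
        _ = h.card - 1 := Finset.card_erase_of_mem hth
        _ = k - 1 := by rw [hU h hh]
    · have : (W.filter (fun w => w ∈ h ∧ (h ∩ T).Nonempty)) = ∅ := by
        apply Finset.filter_false_of_mem
        intro w _ hc
        exact hne hc.2
      rw [this, Finset.card_empty]
      exact Nat.zero_le _
  calc a * W.card = ∑ _w ∈ W, a := by rw [Finset.sum_const, smul_eq_mul, mul_comm]
    _ ≤ ∑ w ∈ W, (H.filter (fun h => w ∈ h ∧ (h ∩ T).Nonempty)).card :=
        Finset.sum_le_sum step1
    _ = ∑ w ∈ W, ∑ h ∈ H, (if w ∈ h ∧ (h ∩ T).Nonempty then 1 else 0) := by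
        refine Finset.sum_congr rfl (fun w _ => ?_)
        rw [Finset.card_filter]
    _ = ∑ h ∈ H, ∑ w ∈ W, (if w ∈ h ∧ (h ∩ T).Nonempty then 1 else 0) := Finset.sum_comm
    _ = ∑ h ∈ H, (W.filter (fun w => w ∈ h ∧ (h ∩ T).Nonempty)).card := by
        refine Finset.sum_congr rfl (fun h _ => ?_)
        rw [Finset.card_filter]
    _ ≤ ∑ _h ∈ H, (k - 1) := Finset.sum_le_sum step2
    _ = (k - 1) * H.card := by rw [Finset.sum_const, smul_eq_mul, mul_comm]

lemma nbr_total {H : Finset (Finset (Fin n))} {k : ℕ}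
    (hU : ∀ h ∈ H, h.card = k) :
    ∑ v : Fin n, (nbr H v).card ≤ k * (k - 1) * H.card := by
  classical
  have h1 : ∀ v : Fin n, (nbr H v).card ≤ ∑ h ∈ H, (if v ∈ h then (k - 1) else 0) := by
    intro v
    calc (nbr H v).card ≤ ∑ h ∈ H.filter (fun h => v ∈ h), (h.erase v).card :=
          Finset.card_biUnion_le
      _ = ∑ h ∈ H.filter (fun h => v ∈ h), (k - 1) := by
          refine Finset.sum_congr rfl (fun h hh => ?_)
          obtain ⟨hH, hv⟩ := Finset.mem_filter.mp hh
          rw [Finset.card_erase_of_mem hv, hU h hH]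
      _ = ∑ h ∈ H, (if v ∈ h then (k - 1) else 0) := by
          rw [Finset.sum_filter]
  calc ∑ v : Fin n, (nbr H v).card
      ≤ ∑ v : Fin n, ∑ h ∈ H, (if v ∈ h then (k - 1) else 0) :=
        Finset.sum_le_sum (fun v _ => h1 v)
    _ = ∑ h ∈ H, ∑ v : Fin n, (if v ∈ h then (k - 1) else 0) := Finset.sum_comm
    _ = ∑ h ∈ H, h.card * (k - 1) := by
        refine Finset.sum_congr rfl (fun h _ => ?_)
        have huniv : Finset.univ.filter (fun v => v ∈ h) = h := by
          ext v; simp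
        rw [← Finset.sum_filter, huniv, Finset.sum_const, smul_eq_mul]
    _ = ∑ _h ∈ H, k * (k - 1) := by
        refine Finset.sum_congr rfl (fun h hh => ?_)
        rw [hU h hh]
    _ = k * (k - 1) * H.card := by rw [Finset.sum_const, smul_eq_mul, mul_comm]


lemma endgame (k l : ℕ) (hk : 2 ≤ k) (hl : 3 ≤ l) (ε : ℝ) (hε : 0 < ε) (hε1 : ε < 1)
    (E : ℕ) (hEge : 2*(k:ℝ)*(l:ℝ)/ε ≤ (E:ℝ)) (hE0 : (0:ℝ) < E)
    (n m ng : ℕ)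
    (hnN : (4*(k:ℝ)*(E:ℝ))/ε ≤ (n:ℝ))
    (c1 : ((l:ℝ)-2)*n ≤ ((k:ℝ)-1)*m + ((l:ℝ)-2)*(((k:ℝ)-1)*E) + ((l:ℝ)-2)*ng)
    (c2 : (ng:ℝ)*E ≤ (k:ℝ)*(((k:ℝ)-1)*m))
    (c3 : ((k:ℝ)-1)*m < ((l:ℝ)-2)*n) :
    (1 - ε) * (((l : ℝ) - 2) / ((k : ℝ) - 1)) * n ≤ (m : ℝ) := by
  have hkR : (2:ℝ) ≤ (k:ℝ) := by exact_mod_cast hk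
  have hlR : (3:ℝ) ≤ (l:ℝ) := by exact_mod_cast hl
  have hb0 : (0:ℝ) < (k:ℝ) - 1 := by linarith
  have ha0 : (0:ℝ) < (l:ℝ) - 2 := by linarith
  have hn0 : (0:ℝ) ≤ (n:ℝ) := Nat.cast_nonneg n
  have c3' : (k:ℝ)*(((k:ℝ)-1)*m) ≤ (k:ℝ)*(((l:ℝ)-2)*n) :=
    mul_le_mul_of_nonneg_left (le_of_lt c3) (by linarith)
  have c4 : (ng:ℝ) ≤ (k:ℝ)*((l:ℝ)-2)*n/E := by
    rw [le_div_iff₀ hE0]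
    nlinarith [c2, c3']
  have d1 : (k:ℝ)*E ≤ ε*n/4 := by
    rw [div_le_iff₀ hε] at hnN
    linarith
  have d2 : ((l:ℝ)-2)*(((k:ℝ)-1)*E) ≤ ((l:ℝ)-2)*(ε*n/4) := by
    have inner : ((k:ℝ)-1)*E ≤ ε*n/4 := by
      nlinarith [d1, (Nat.cast_nonneg E : (0:ℝ) ≤ (E:ℝ))]
    exact mul_le_mul_of_nonneg_left inner (le_of_lt ha0)
  have d3 : (k:ℝ)*((l:ℝ)-2)*n/E ≤ ε*n/2 := by
    rw [div_le_iff₀ hE0]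
    have e1 : 0 ≤ ε*n/2 := by positivity
    have e2 : (ε*n/2)*(2*(k:ℝ)*l/ε) ≤ (ε*n/2)*E := mul_le_mul_of_nonneg_left hEge e1
    have e3 : (ε*n/2)*(2*(k:ℝ)*l/ε) = (k:ℝ)*l*n := by
      field_simp
    nlinarith [e2, e3, hkR, hn0]
  have d4 : ((l:ℝ)-2)*ng ≤ ((l:ℝ)-2)*(ε*n/2) :=
    mul_le_mul_of_nonneg_left (le_trans c4 d3) (le_of_lt ha0)
  have comb : ((l:ℝ)-2)*n ≤ ((k:ℝ)-1)*m + ((l:ℝ)-2)*(ε*n/4) + ((l:ℝ)-2)*(ε*n/2) := by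
    linarith
  have P : 0 ≤ ε*(((l:ℝ)-2)*n) :=
    mul_nonneg (le_of_lt hε) (mul_nonneg (le_of_lt ha0) hn0)
  have final : (1-ε)*(((l:ℝ)-2)*n) ≤ ((k:ℝ)-1)*m := by
    linarith [comb, P]
  rw [show (1 - ε) * (((l : ℝ) - 2) / ((k : ℝ) - 1)) * n
      = ((1-ε)*((l:ℝ)-2)*n)/((k:ℝ)-1) by ring, div_le_iff₀ hb0]
  linear_combination final

lemma main_nat (k l E : ℕ) (hk : 2 ≤ k) (hE : 1 ≤ E)
    (H : Finset (Finset (Fin n))) (hU : ∀ e ∈ H, e.card = k)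
    (hfree : ¬ HasBergeClique l H)
    (hsat : ∀ e : Finset (Fin n), e.card = k → e ∉ H →
      HasBergeClique l (insert e H)) :
    ∃ ng : ℕ, ng * E ≤ k * (k - 1) * H.card ∧
      (l - 2) * n ≤ (k - 1) * H.card + (l - 2) * ((k - 1) * E) + (l - 2) * ng := by
  classical
  set a := l - 2 with ha
  set Good : Finset (Fin n) := Finset.univ.filter (fun v => (nbr H v).card < E) with hGoodDef
  set C : Finset (Finset (Fin n)) := Good.powerset.filter
      (fun S => S.card ≤ k - 1 ∧ ∀ x ∈ S, ∀ y ∈ S, x ≠ y →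
        ¬(blk H a x y ∧ blk H a y x)) with hCdef
  have hCne : C.Nonempty := by
    refine ⟨∅, ?_⟩
    rw [hCdef, Finset.mem_filter, Finset.mem_powerset]
    refine ⟨Finset.empty_subset _, ?_, ?_⟩
    · simp
    · intro x hx; simp at hx
  obtain ⟨S, hSC, hSmax⟩ := Finset.exists_max_image C Finset.card hCne
  have hSC' := hSC
  rw [hCdef, Finset.mem_filter, Finset.mem_powerset] at hSC'
  obtain ⟨hSG, hSk, hScompat⟩ := hSC'
  set T : Finset (Fin n) := S ∪ S.biUnion (nbr H) with hTdef
  have hGoodNbr : ∀ u ∈ S, (nbr H u).card ≤ E - 1 := by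
    intro u hu
    have := (Finset.mem_filter.mp (hSG hu)).2
    omega
  have hTcard : T.card ≤ (k - 1) * E := by
    have h1 : T.card ≤ S.card + (S.biUnion (nbr H)).card := Finset.card_union_le _ _
    have h2 : (S.biUnion (nbr H)).card ≤ ∑ u ∈ S, (nbr H u).card := Finset.card_biUnion_le
    have h3 : ∑ u ∈ S, (nbr H u).card ≤ ∑ _u ∈ S, (E - 1) :=
      Finset.sum_le_sum (fun u hu => hGoodNbr u hu)
    have h4 : ∑ _u ∈ S, (E - 1) = S.card * (E - 1) := by
      rw [Finset.sum_const, smul_eq_mul]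
    have h5 : S.card + S.card * (E - 1) = S.card * E := by
      obtain ⟨E', rfl⟩ : ∃ E', E = E' + 1 := ⟨E - 1, by omega⟩
      rw [Nat.add_sub_cancel, Nat.mul_succ]
      omega
    calc T.card ≤ S.card + S.card * (E - 1) := by omega
      _ = S.card * E := h5
      _ ≤ (k - 1) * E := Nat.mul_le_mul_right _ hSk
  have hnbr_sub_T : ∀ u ∈ S, nbr H u ⊆ T := fun u hu =>
    (Finset.subset_biUnion_of_mem (nbr H) hu).trans Finset.subset_union_right
  by_cases hcase : S.card = k - 1
  · -- Case A : full compatible set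
    refine ⟨0, by simp, ?_⟩
    set W : Finset (Fin n) := Finset.univ \ T with hWdef
    have hch : ∀ w ∈ W, chargeTo H a w T := by
      intro w hw
      have hwT : w ∉ T := (Finset.mem_sdiff.mp hw).2
      have hwS : w ∉ S := fun h => hwT (Finset.mem_union_left _ h)
      set e : Finset (Fin n) := insert w S with hedef
      have hecard : e.card = k := by
        rw [hedef, Finset.card_insert_of_notMem hwS, hcase]
        omega
      have heH : e ∉ H := by
        intro heH
        have hSne : S.Nonempty := Finset.card_pos.mp (by omega)
        obtain ⟨u, hu⟩ := hSne
        have hwu : w ≠ u := fun h => hwS (h ▸ hu)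
        have : w ∈ nbr H u := mem_nbr.mpr ⟨e, heH, Finset.mem_insert_of_mem hu,
          Finset.mem_insert_self _ _, hwu⟩
        exact hwT (hnbr_sub_T u hu this)
      obtain ⟨x, hxe, y, hye, hxy, hbxy, hbyx⟩ := pair_of_sat hfree (hsat e hecard heH)
      rcases Finset.mem_insert.mp hxe with hxw | hxS
      · have hyS : y ∈ S := by
          rcases Finset.mem_insert.mp hye with hyw | hyS
          · exact absurd (hyw.trans hxw.symm) hxy.symm
          · exact hyS
        exact chargeTo_mono (hnbr_sub_T y hyS) (hxw ▸ hbxy)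
      · rcases Finset.mem_insert.mp hye with hyw | hyS
        · exact chargeTo_mono (hnbr_sub_T x hxS) (hyw ▸ hbyx)
        · exact absurd ⟨hbxy, hbyx⟩ (hScompat x hxS y hyS hxy)
    have hcount := count_lemma hU W T (fun w hw => (Finset.mem_sdiff.mp hw).2) hch
    have hWn : n ≤ W.card + T.card := by
      have hcover : (Finset.univ : Finset (Fin n)) ⊆ W ∪ T := by
        intro v _
        by_cases hv : v ∈ T
        · exact Finset.mem_union_right _ hv
        · exact Finset.mem_union_left _ (Finset.mem_sdiff.mpr ⟨Finset.mem_univ _, hv⟩)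
      calc n = (Finset.univ : Finset (Fin n)).card := (Finset.card_fin n).symm
        _ ≤ (W ∪ T).card := Finset.card_le_card hcover
        _ ≤ W.card + T.card := Finset.card_union_le _ _
    have : a * n ≤ a * W.card + a * T.card := by
      calc a * n ≤ a * (W.card + T.card) := Nat.mul_le_mul_left _ hWn
        _ = a * W.card + a * T.card := by ring
    have h6 : a * T.card ≤ a * ((k - 1) * E) := Nat.mul_le_mul_left _ hTcard
    omega
  · -- Case B : maximal compatible set is small
    have hSlt : S.card < k - 1 := lt_of_le_of_ne hSk hcase
    have hblocked : ∀ v ∈ Good, v ∉ S → ∃ u ∈ S, blk H a v u ∧ blk H a u v := by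
      intro v hv hvS
      by_contra hno
      push_neg at hno
      have hS' : insert v S ∈ C := by
        rw [hCdef, Finset.mem_filter, Finset.mem_powerset]
        refine ⟨Finset.insert_subset hv hSG, ?_, ?_⟩
        · rw [Finset.card_insert_of_notMem hvS]; omega
        · intro x hx y hy hxy
          rcases Finset.mem_insert.mp hx with rfl | hxS
          · rcases Finset.mem_insert.mp hy with rfl | hyS
            · exact absurd rfl hxy
            · rintro ⟨p, q⟩; exact hno y hyS p q
          · rcases Finset.mem_insert.mp hy with rfl | hyS
            · rintro ⟨p, q⟩; exact hno x hxS q p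
            · exact hScompat x hxS y hyS hxy
      have := hSmax _ hS'
      rw [Finset.card_insert_of_notMem hvS] at this
      omega
    set NG : Finset (Fin n) := Finset.univ.filter (fun v => ¬ (nbr H v).card < E)
      with hNGdef
    refine ⟨NG.card, ?_, ?_⟩
    · have h1 : NG.card • E ≤ ∑ v ∈ NG, (nbr H v).card := by
        apply Finset.card_nsmul_le_sum
        intro v hv
        have := (Finset.mem_filter.mp hv).2
        omega
      have h2 : ∑ v ∈ NG, (nbr H v).card ≤ ∑ v : Fin n, (nbr H v).card :=
        Finset.sum_le_sum_of_subset (Finset.filter_subset _ _)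
      have h3 := nbr_total (k := k) hU
      calc NG.card * E = NG.card • E := by rw [smul_eq_mul]
        _ ≤ k * (k - 1) * H.card := le_trans h1 (le_trans h2 h3)
    · set W : Finset (Fin n) := Good \ T with hWdef
      have hch : ∀ w ∈ W, chargeTo H a w T := by
        intro w hw
        obtain ⟨hwG, hwT⟩ := Finset.mem_sdiff.mp hw
        have hwS : w ∉ S := fun h => hwT (Finset.mem_union_left _ h)
        obtain ⟨u, hu, hb, _⟩ := hblocked w hwG hwS
        exact chargeTo_mono (hnbr_sub_T u hu) hb
      have hcount := count_lemma hU W T (fun w hw => (Finset.mem_sdiff.mp hw).2) hch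
      have hGn : n ≤ W.card + T.card + NG.card := by
        have hcover : (Finset.univ : Finset (Fin n)) ⊆ (W ∪ T) ∪ NG := by
          intro v _
          by_cases h5 : (nbr H v).card < E
          · by_cases h6 : v ∈ T
            · exact Finset.mem_union_left _ (Finset.mem_union_right _ h6)
            · refine Finset.mem_union_left _ (Finset.mem_union_left _ ?_)
              exact Finset.mem_sdiff.mpr
                ⟨Finset.mem_filter.mpr ⟨Finset.mem_univ _, h5⟩, h6⟩
          · exact Finset.mem_union_right _
              (Finset.mem_filter.mpr ⟨Finset.mem_univ _, h5⟩)
        calc n = (Finset.univ : Finset (Fin n)).card := (Finset.card_fin n).symm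
          _ ≤ ((W ∪ T) ∪ NG).card := Finset.card_le_card hcover
          _ ≤ (W ∪ T).card + NG.card := Finset.card_union_le _ _
          _ ≤ W.card + T.card + NG.card := by
              have := Finset.card_union_le W T
              omega
      have h7 : a * n ≤ a * W.card + a * T.card + a * NG.card := by
        calc a * n ≤ a * (W.card + T.card + NG.card) := Nat.mul_le_mul_left _ hGn
          _ = a * W.card + a * T.card + a * NG.card := by ring
      have h8 : a * T.card ≤ a * ((k - 1) * E) := Nat.mul_le_mul_left _ hTcard
      omega

end Stmt12Aux

/-- `sat_k(n, Berge-K_ℓ) ≥ (1+o(1))·((ℓ−2)/(k−1))·n`: for every `ε > 0`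
there is `N` such that for all `n ≥ N`, every Berge-`K_ℓ`-saturated `k`-uniform
hypergraph on `n` vertices has at least `(1−ε)·((ℓ−2)/(k−1))·n` hyperedges. -/
theorem stmt12 (k l : ℕ) (hk : 2 ≤ k) (hl : 3 ≤ l) (ε : ℝ) (hε : 0 < ε) :
    ∃ N : ℕ, ∀ n : ℕ, N ≤ n → ∀ H : Finset (Finset (Fin n)),
      (∀ e ∈ H, e.card = k) →
      ¬ HasBergeClique l H →
      (∀ e : Finset (Fin n), e.card = k → e ∉ H →
        HasBergeClique l (insert e H)) →
      (1 - ε) * (((l : ℝ) - 2) / ((k : ℝ) - 1)) * n ≤ (H.card : ℝ) := by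
  classical
  have hkR : (2:ℝ) ≤ (k:ℝ) := by exact_mod_cast hk
  have hlR : (3:ℝ) ≤ (l:ℝ) := by exact_mod_cast hl
  have hb0 : (0:ℝ) < (k:ℝ) - 1 := by linarith
  have ha0 : (0:ℝ) < (l:ℝ) - 2 := by linarith
  by_cases hε1 : 1 ≤ ε
  · refine ⟨0, fun n _ H _ _ _ => ?_⟩
    have hn0 : (0:ℝ) ≤ (n:ℝ) := Nat.cast_nonneg n
    have h2 : 0 ≤ (((l:ℝ) - 2) / ((k:ℝ) - 1)) * n :=
      mul_nonneg (div_nonneg (le_of_lt ha0) (le_of_lt hb0)) hn0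
    have h3 : (1 - ε) * ((((l:ℝ) - 2) / ((k:ℝ) - 1)) * n) ≤ 0 :=
      mul_nonpos_of_nonpos_of_nonneg (by linarith) h2
    calc (1 - ε) * (((l:ℝ) - 2) / ((k:ℝ) - 1)) * n
        = (1 - ε) * ((((l:ℝ) - 2) / ((k:ℝ) - 1)) * n) := by ring
      _ ≤ 0 := h3
      _ ≤ (H.card : ℝ) := Nat.cast_nonneg _
  · push_neg at hε1
    have h2l : 2 ≤ l := by omega
    have h1k : 1 ≤ k := by omega
    have h2kl : (0:ℝ) < 2*(k:ℝ)*(l:ℝ) := by nlinarith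
    have hEpos : (0:ℝ) < 2*(k:ℝ)*(l:ℝ)/ε := div_pos h2kl hε
    obtain ⟨E, hE1, hEge⟩ : ∃ E : ℕ, 1 ≤ E ∧ 2*(k:ℝ)*(l:ℝ)/ε ≤ (E:ℝ) :=
      ⟨⌈2*(k:ℝ)*(l:ℝ)/ε⌉₊, Nat.ceil_pos.mpr hEpos, Nat.le_ceil _⟩
    have hE0 : (0:ℝ) < (E:ℝ) := by
      have : (1:ℝ) ≤ (E:ℝ) := by exact_mod_cast hE1
      linarith
    refine ⟨⌈4*(k:ℝ)*(E:ℝ)/ε⌉₊, ?_⟩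
    intro n hn H hU hfree hsat
    have hn0 : (0:ℝ) ≤ (n:ℝ) := Nat.cast_nonneg n
    have hnN : 4*(k:ℝ)*(E:ℝ)/ε ≤ (n:ℝ) :=
      le_trans (Nat.le_ceil _) (by exact_mod_cast hn)
    by_cases hmb : (l - 2) * n ≤ (k - 1) * H.card
    · have c0 : ((l:ℝ)-2)*n ≤ ((k:ℝ)-1)*H.card := by
        have hc := (Nat.cast_le (α := ℝ)).mpr hmb
        push_cast [Nat.cast_sub h2l, Nat.cast_sub h1k] at hc
        exact hc
      have h2 : (((l:ℝ)-2)/((k:ℝ)-1))*n ≤ (H.card:ℝ) := by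
        rw [div_mul_eq_mul_div, div_le_iff₀ hb0]
        linarith
      have h2nn : 0 ≤ (((l:ℝ)-2)/((k:ℝ)-1))*n :=
        mul_nonneg (div_nonneg (le_of_lt ha0) (le_of_lt hb0)) hn0
      calc (1 - ε) * (((l:ℝ) - 2) / ((k:ℝ) - 1)) * n
          = (1 - ε) * ((((l:ℝ) - 2) / ((k:ℝ) - 1)) * n) := by ring
        _ ≤ 1 * ((((l:ℝ) - 2) / ((k:ℝ) - 1)) * n) :=
            mul_le_mul_of_nonneg_right (by linarith) h2nn
        _ = (((l:ℝ) - 2) / ((k:ℝ) - 1)) * n := one_mul _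
        _ ≤ (H.card : ℝ) := h2
    · push_neg at hmb
      obtain ⟨ng, hng, hmain⟩ := Stmt12Aux.main_nat k l E hk hE1 H hU hfree hsat
      have c1 : ((l:ℝ)-2)*n ≤ ((k:ℝ)-1)*H.card + ((l:ℝ)-2)*(((k:ℝ)-1)*E)
          + ((l:ℝ)-2)*ng := by
        have hc := (Nat.cast_le (α := ℝ)).mpr hmain
        push_cast [Nat.cast_sub h2l, Nat.cast_sub h1k] at hc
        exact hc
      have c2 : (ng:ℝ)*E ≤ (k:ℝ)*(((k:ℝ)-1)*H.card) := by
        have hc := (Nat.cast_le (α := ℝ)).mpr hng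
        push_cast [Nat.cast_sub h1k] at hc
        linarith [hc]
      have c3 : ((k:ℝ)-1)*H.card < ((l:ℝ)-2)*n := by
        have hc := (Nat.cast_lt (α := ℝ)).mpr hmb
        push_cast [Nat.cast_sub h2l, Nat.cast_sub h1k] at hc
        exact hc
      exact Stmt12Aux.endgame k l hk hl ε hε hε1 E hEge hE0 n H.card ng hnN c1 c2 c3
end

section
/- Let F be a graph with independence number α(F) and minimum degree δ(F), with |V(F)| ≥ α(F) + 2, and set ν = |V(F)| − α(F) − 1. Fix k > ν and n ≥ 10k|V(F)|³, and let a, t ≥ 0 satisfy a(k − ν + 1) + t = n − ν with 0 ≤ t < k − ν + 1. Let H(n,k,F) be the k-uniform hypergraph with vertex set V₁ ∪ A₁ ∪ ... ∪ A_a ∪ T (disjoint, |V₁| = ν, each |A_i| = k − ν + 1, |T| = t, V₁ = {v₁,...,v_ν}) and hyperedges (V₁ ∪ A_i) \ {v_j} for i ∈ [a], j ∈ [ν]. If δ(F) > (|V(F)| − α(F))/2, then H(n,k,F) contains no Berge-F. -/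
/-- A hypergraph `H` (a finite set of hyperedges) contains a Berge-`F`: an injective
embedding `ψ` of the vertices of `F` together with an injective assignment `φ` of
hyperedges of `H` to the edges of `F`, each edge contained in its assigned hyperedge. -/
def HasBerge {α V : Type*} (F : SimpleGraph α) (H : Finset (Finset V)) : Prop :=
  ∃ ψ : α → V, Function.Injective ψ ∧
    ∃ φ : Sym2 α → Finset V, Set.InjOn φ F.edgeSet ∧
      ∀ e ∈ F.edgeSet, φ e ∈ H ∧ ∀ x ∈ e, ψ x ∈ φ e

/-- The independence number of a graph. -/
noncomputable def indepNum {α : Type*} [Fintype α] (F : SimpleGraph α) : ℕ :=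
  sSup {m : ℕ | ∃ s : Finset α,
    (∀ x ∈ s, ∀ y ∈ s, x ≠ y → ¬ F.Adj x y) ∧ s.card = m}

/-- The independence number is at least the cardinality of any independent set. -/
lemma indepNum_ge {α : Type*} [Fintype α] (F : SimpleGraph α) (s : Finset α)
    (hs : ∀ x ∈ s, ∀ y ∈ s, x ≠ y → ¬ F.Adj x y) : s.card ≤ indepNum F := by
  apply le_csSup
  · exact ⟨Fintype.card α, fun m hm => by
      obtain ⟨u, -, hu⟩ := hm; exact hu ▸ u.card_le_univ⟩
  · exact ⟨s, hs, rfl⟩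

/-- with `ν = |V(F)| − α(F) − 1 < k`, the hypergraph `H(n,k,F)` with
vertex set `V₁ ∪ A₁ ∪ ... ∪ A_a ∪ T` (`V₁ = {0,...,ν−1}`, `|Aᵢ| = k−ν+1` pairwise
disjoint) and hyperedges `(V₁ ∪ Aᵢ) \ {vⱼ}` contains no Berge-`F`, provided
`δ(F) > (|V(F)| − α(F))/2`. -/
theorem stmt14 {α : Type*} [Fintype α] [DecidableEq α]
    (F : SimpleGraph α) [DecidableRel F.Adj] [Nonempty α]
    (k n a t ν : ℕ)
    (hν : ν = Fintype.card α - indepNum F - 1)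
    (hcard : indepNum F + 2 ≤ Fintype.card α)
    (hk : ν < k) (hn : 10 * k * (Fintype.card α) ^ 3 ≤ n)
    (hat : a * (k - ν + 1) + t = n - ν) (ht : t < k - ν + 1)
    (A : Fin a → Finset ℕ)
    (hA : ∀ i, (A i).card = k - ν + 1)
    (hAV : ∀ i, Disjoint (A i) (Finset.range ν))
    (hAA : ∀ i j, i ≠ j → Disjoint (A i) (A j))
    (hδ : ((Fintype.card α : ℝ) - (indepNum F : ℝ)) / 2 < (F.minDegree : ℝ)) :
    ¬ HasBerge F
      (Finset.image
        (fun p : Fin a × Fin ν => (Finset.range ν ∪ A p.1) \ {(p.2 : ℕ)})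
        Finset.univ) := by
  rintro ⟨ψ, hψ, φ, hφinj, hφ⟩
  -- ν + indepNum F + 1 = card
  have hνc : ν + indepNum F + 1 = Fintype.card α := by omega
  -- 2 * minDegree ≥ ν + 2
  have hδν : ν + 2 ≤ 2 * F.minDegree := by
    have h1 : ((ν : ℝ) + 1) / 2 < (F.minDegree : ℝ) := by
      have he : (Fintype.card α : ℝ) - (indepNum F : ℝ) = (ν : ℝ) + 1 := by
        rw [← hνc]; push_cast; ring
      rwa [he] at hδ
    have h2 : (ν : ℝ) + 1 < 2 * (F.minDegree : ℝ) := by linarith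
    have h3 : (ν : ℕ) + 1 < 2 * F.minDegree := by exact_mod_cast h2
    omega
  have hδ1 : 1 ≤ F.minDegree := by omega
  have hdeg : ∀ x : α, 1 ≤ F.degree x := fun x =>
    le_trans hδ1 (F.minDegree_le_degree x)
  -- incidence finset membership characterization
  have hinc : ∀ (v : α) (e : Sym2 α),
      e ∈ F.incidenceFinset v ↔ e ∈ F.edgeSet ∧ v ∈ e := by
    intro v e
    rw [SimpleGraph.mem_incidenceFinset]
    exact Iff.rfl
  -- the key two-vertex lemma: no two distinct vertices map into the same A i
  have key : ∀ (i : Fin a) (x y : α), x ≠ y → ψ x ∈ A i → ψ y ∈ A i → False := by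
    intro i x y hxy hx hy
    set S : Finset (Finset ℕ) :=
      Finset.image (fun j : Fin ν => (Finset.range ν ∪ A i) \ {(j : ℕ)}) Finset.univ with hS
    set E : Finset (Sym2 α) := F.incidenceFinset x ∪ F.incidenceFinset y with hE
    have hEedge : ∀ e ∈ E, e ∈ F.edgeSet := by
      intro e he
      rcases Finset.mem_union.1 he with h | h
      · exact ((hinc x e).1 h).1
      · exact ((hinc y e).1 h).1
    have hmap : ∀ e ∈ E, φ e ∈ S := by
      intro e he
      have hedge := hEedge e he
      obtain ⟨hφe, hend⟩ := hφ e hedge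
      obtain ⟨p, -, hp⟩ := Finset.mem_image.1 hφe
      have hz : ∃ z, z ∈ e ∧ ψ z ∈ A i := by
        rcases Finset.mem_union.1 he with h | h
        · exact ⟨x, ((hinc x e).1 h).2, hx⟩
        · exact ⟨y, ((hinc y e).1 h).2, hy⟩
      obtain ⟨z, hz, hzA⟩ := hz
      have hzφ : ψ z ∈ φ e := hend z hz
      rw [← hp] at hzφ
      have hznr : ψ z ∉ Finset.range ν := Finset.disjoint_left.1 (hAV i) hzA
      have hzAp : ψ z ∈ A p.1 := by
        rcases Finset.mem_union.1 (Finset.mem_sdiff.1 hzφ).1 with h | h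
        · exact absurd h hznr
        · exact h
      have hip : p.1 = i := by
        by_contra hne
        exact (Finset.disjoint_left.1 (hAA p.1 i hne) hzAp) hzA
      rw [hS]
      exact Finset.mem_image.2 ⟨p.2, Finset.mem_univ _, by rw [← hp, hip]⟩
    -- card of φ-image of E equals card of E, bounded by ν
    have hcardE : E.card ≤ ν := by
      have hinj : Set.InjOn φ E := fun u hu v hv huv =>
        hφinj (hEedge u hu) (hEedge v hv) huv
      have h1 : (Finset.image φ E).card = E.card := Finset.card_image_of_injOn hinj
      have h2 : Finset.image φ E ⊆ S := by
        intro s hs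
        obtain ⟨e, he, rfl⟩ := Finset.mem_image.1 hs
        exact hmap e he
      have h3 : S.card ≤ ν := le_trans Finset.card_image_le (by simp)
      calc E.card = (Finset.image φ E).card := h1.symm
        _ ≤ S.card := Finset.card_le_card h2
        _ ≤ ν := h3
    -- but E has at least 2·minDegree − 1 ≥ ν + 1 elements
    have hinter : F.incidenceFinset x ∩ F.incidenceFinset y ⊆ {s(x, y)} := by
      intro e he
      obtain ⟨h1, h2⟩ := Finset.mem_inter.1 he
      have hxe : x ∈ e := ((hinc x e).1 h1).2
      have hye : y ∈ e := ((hinc y e).1 h2).2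
      have := (Sym2.mem_and_mem_iff hxy).1 ⟨hxe, hye⟩
      simp [this]
    have hux : F.minDegree ≤ (F.incidenceFinset x).card := by
      rw [F.card_incidenceFinset_eq_degree]; exact F.minDegree_le_degree x
    have huy : F.minDegree ≤ (F.incidenceFinset y).card := by
      rw [F.card_incidenceFinset_eq_degree]; exact F.minDegree_le_degree y
    have hun := Finset.card_union_add_card_inter (F.incidenceFinset x)
      (F.incidenceFinset y)
    have hint1 : (F.incidenceFinset x ∩ F.incidenceFinset y).card ≤ 1 :=
      le_trans (Finset.card_le_card hinter) (by simp)
    have hEcard : (F.incidenceFinset x ∪ F.incidenceFinset y).card = E.card := by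
      rw [hE]
    omega
  -- the set W of vertices mapped outside range ν
  set U : Finset α := Finset.univ.filter (fun x => ψ x ∈ Finset.range ν) with hU
  set W : Finset α := Finset.univ \ U with hW
  have hUcard : U.card ≤ ν := by
    have h1 : U.card = (Finset.image ψ U).card :=
      (Finset.card_image_of_injOn (fun u _ v _ h => hψ h)).symm
    have h2 : Finset.image ψ U ⊆ Finset.range ν := by
      intro m hm
      obtain ⟨x, hx, rfl⟩ := Finset.mem_image.1 hm
      exact (Finset.mem_filter.1 hx).2
    calc U.card = (Finset.image ψ U).card := h1
      _ ≤ (Finset.range ν).card := Finset.card_le_card h2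
      _ = ν := Finset.card_range ν
  have hWcard : indepNum F + 1 ≤ W.card := by
    have h1 : W.card = Fintype.card α - U.card := by
      rw [hW, Finset.card_sdiff_of_subset (Finset.subset_univ U), Finset.card_univ]
    omega
  -- every vertex of W maps into some A i
  have hWA : ∀ x ∈ W, ∃ i : Fin a, ψ x ∈ A i := by
    intro x hxW
    have hxnr : ψ x ∉ Finset.range ν := by
      intro h
      exact (Finset.mem_sdiff.1 hxW).2 (Finset.mem_filter.2 ⟨Finset.mem_univ _, h⟩)
    have hpos : 0 < (F.neighborFinset x).card := by
      rw [F.card_neighborFinset_eq_degree]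
      exact lt_of_lt_of_le Nat.zero_lt_one (hdeg x)
    obtain ⟨y, hy⟩ := Finset.card_pos.1 hpos
    have hadj : F.Adj x y := (F.mem_neighborFinset x y).1 hy
    have hedge : s(x, y) ∈ F.edgeSet := hadj
    obtain ⟨hφe, hend⟩ := hφ _ hedge
    obtain ⟨p, -, hp⟩ := Finset.mem_image.1 hφe
    have hxφ : ψ x ∈ φ s(x, y) := hend x (Sym2.mem_mk_left x y)
    rw [← hp] at hxφ
    rcases Finset.mem_union.1 (Finset.mem_sdiff.1 hxφ).1 with h | h
    · exact absurd h hxnr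
    · exact ⟨p.1, h⟩
  -- W is independent
  have hindep : ∀ x ∈ W, ∀ y ∈ W, x ≠ y → ¬ F.Adj x y := by
    intro x hxW y hyW hxy hadj
    obtain ⟨i, hi⟩ := hWA x hxW
    obtain ⟨j, hj⟩ := hWA y hyW
    have hedge : s(x, y) ∈ F.edgeSet := hadj
    obtain ⟨hφe, hend⟩ := hφ _ hedge
    obtain ⟨p, -, hp⟩ := Finset.mem_image.1 hφe
    have hxφ : ψ x ∈ φ s(x, y) := hend x (Sym2.mem_mk_left x y)
    have hyφ : ψ y ∈ φ s(x, y) := hend y (Sym2.mem_mk_right x y)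
    rw [← hp] at hxφ hyφ
    have hxA : ψ x ∈ A p.1 := by
      rcases Finset.mem_union.1 (Finset.mem_sdiff.1 hxφ).1 with h | h
      · exact absurd h (Finset.disjoint_left.1 (hAV i) hi)
      · exact h
    have hyA : ψ y ∈ A p.1 := by
      rcases Finset.mem_union.1 (Finset.mem_sdiff.1 hyφ).1 with h | h
      · exact absurd h (Finset.disjoint_left.1 (hAV j) hj)
      · exact h
    exact key p.1 x y hxy hxA hyA
  have hle := indepNum_ge F W hindep
  omega
end

section
/- Let G be a graph containing a cycle, with girth g and vertex feedback number f satisfying f < g and f ≤ k. Let H = H_k(n, k−f+1, G, S) be the hypergraph of Construction: V = V₁ ∪ V₂ ∪ V₃ with |V₁| = f; edges between V₁ and V₂ forming a Berge-G[S] with core vertices in V₁ (one k-edge per edge of G[S], pairwise disjoint outside V₁); and for each a-set A in a partition M of a subset V₃' ⊆ V₃ into sets of size a = k−f+1, all binom(f, f−1) = f hyperedges containing A and k−a = f−1 vertices of V₁. Then H contains no Berge-G. -/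
/-- The vertex feedback number of a graph: the least size of a set of vertices whose
deletion leaves an acyclic graph. -/
noncomputable def feedbackNum {α : Type*} [Fintype α] (F : SimpleGraph α) : ℕ :=
  sInf {m : ℕ | ∃ s : Finset α, s.card = m ∧
    (F.induce ((↑s : Set α)ᶜ)).IsAcyclic}

/-- let `G` have a cycle, girth `g`, feedback number `f` with `f < g`
and `f ≤ k`, and let `S` be a minimum feedback set. The hypergraph
`H_k(n, k−f+1, G, S)` — consisting of one `k`-edge `{lab x, lab y} ∪ W` (with
`W ⊆ V₂`, `|W| = k−2`, pairwise disjoint) for each edge `xy` of `G[S]`, together with,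
for each `(k−f+1)`-set `A` of the partition `M`, all edges `A ∪ W` with `W ⊆ V₁`,
`|W| = f−1` — contains no Berge-`G`. -/
theorem stmt17 {α V : Type*} [Fintype α] [DecidableEq α] [DecidableEq V]
    (G : SimpleGraph α) (hcyc : ¬ G.IsAcyclic)
    (k f : ℕ) (hf : f = feedbackNum G) (hfg : (f : ℕ∞) < G.girth)
    (hfk : f ≤ k) (hk : 3 ≤ k)
    (S : Finset α) (hSfeed : (G.induce ((↑S : Set α)ᶜ)).IsAcyclic)
    (hScard : S.card = f)
    (V₁ V₂ : Finset V) (hV₁ : V₁.card = f) (h12 : Disjoint V₁ V₂)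
    (lab : α → V) (hlab : Set.InjOn lab ↑S) (hlabim : S.image lab = V₁)
    (E₀ : Finset (Finset V))
    (φ : Sym2 α → Finset V)
    (hφinj : Set.InjOn φ {e | e ∈ G.edgeSet ∧ ∀ x ∈ e, x ∈ S})
    (hφim : ∀ e ∈ E₀, ∃ p ∈ G.edgeSet, (∀ x ∈ p, x ∈ S) ∧ φ p = e)
    (hφmem : ∀ p ∈ G.edgeSet, (∀ x ∈ p, x ∈ S) → φ p ∈ E₀)
    (hφform : ∀ x y, G.Adj x y → x ∈ S → y ∈ S →
      ∃ W ⊆ V₂, W.card = k - 2 ∧ φ s(x, y) = {lab x, lab y} ∪ W)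
    (hφdisj : ∀ p ∈ G.edgeSet, ∀ q ∈ G.edgeSet,
      (∀ x ∈ p, x ∈ S) → (∀ x ∈ q, x ∈ S) → p ≠ q →
        Disjoint (φ p ∩ V₂) (φ q ∩ V₂))
    (M : Finset (Finset V))
    (hM : ∀ A ∈ M, A.card = k - f + 1 ∧ Disjoint A (V₁ ∪ V₂))
    (hMdisj : ∀ A ∈ M, ∀ A' ∈ M, A ≠ A' → Disjoint A A') :
    ¬ HasBerge G
      (E₀ ∪ M.biUnion
        (fun A => (V₁.powersetCard (f - 1)).image (fun W => A ∪ W))) := by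
  rintro ⟨ψ, hψ, φ', hφ'inj, hφ'mem⟩
  classical
  -- f is positive
  have f_pos : 0 < f := by
    rcases Nat.eq_zero_or_pos f with h0 | h
    · exfalso
      apply hcyc
      have hS0 : S = ∅ := Finset.card_eq_zero.mp (hScard.trans h0)
      rw [hS0] at hSfeed
      have emb : G ↪g G.induce ((↑(∅ : Finset α) : Set α)ᶜ) :=
        { toFun := fun v => ⟨v, by simp⟩
          inj' := fun a b h => congrArg Subtype.val h
          map_rel_iff' := Iff.rfl }
      intro v c hc
      exact hSfeed (c.map emb.toHom) (hc.map emb.injective)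
    · exact h
  -- classification of hyperedges used by the Berge embedding
  have class1 : ∀ e ∈ G.edgeSet,
      (∃ p ∈ G.edgeSet, (∀ x ∈ p, x ∈ S) ∧ φ p = φ' e ∧ φ' e ⊆ V₁ ∪ V₂) ∨
      (∃ A ∈ M, ∃ W ∈ V₁.powersetCard (f - 1), φ' e = A ∪ W) := by
    intro e he
    have hmem := (hφ'mem e he).1
    rw [Finset.mem_union] at hmem
    rcases hmem with h0 | h1
    · left
      obtain ⟨p, hp, hpS, hpe⟩ := hφim _ h0
      refine ⟨p, hp, hpS, hpe, ?_⟩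
      revert hp hpS hpe
      induction p using Sym2.ind with
      | _ a b =>
        intro hp hpS hpe
        obtain ⟨W, hWV₂, -, hform⟩ := hφform a b hp (hpS a (by simp)) (hpS b (by simp))
        rw [← hpe, hform]
        intro z hz
        rw [Finset.mem_union] at hz ⊢
        rcases hz with hz | hz
        · rw [Finset.mem_insert, Finset.mem_singleton] at hz
          left
          rw [← hlabim]
          rcases hz with rfl | rfl
          · exact Finset.mem_image_of_mem _ (hpS a (by simp))
          · exact Finset.mem_image_of_mem _ (hpS b (by simp))
        · exact Or.inr (hWV₂ hz)
    · right
      obtain ⟨A, hA, hmem'⟩ := Finset.mem_biUnion.1 h1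
      obtain ⟨W, hW, heq⟩ := Finset.mem_image.1 hmem'
      exact ⟨A, hA, W, hW, heq.symm⟩
  -- edges incident to a vertex embedded in some A ∈ M
  have factA : ∀ A ∈ M, ∀ u w, G.Adj u w → ψ u ∈ A →
      ∃ W ∈ V₁.powersetCard (f - 1), φ' s(u, w) = A ∪ W := by
    intro A hA u w huw hu
    have he : s(u, w) ∈ G.edgeSet := huw
    have hdisj := (hM A hA).2
    have huφ : ψ u ∈ φ' s(u, w) := (hφ'mem _ he).2 u (by simp)
    rcases class1 _ he with ⟨p, hp, hpS, hpe, hsub⟩ | ⟨A', hA', W, hW, heq⟩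
    · exact absurd (hsub huφ) (Finset.disjoint_left.1 hdisj hu)
    · have hWV₁ : W ⊆ V₁ := (Finset.mem_powersetCard.1 hW).1
      have hu' : ψ u ∈ A' ∪ W := heq ▸ huφ
      have hu'' : ψ u ∈ A' := by
        rcases Finset.mem_union.1 hu' with h | h
        · exact h
        · exact absurd (Finset.mem_union_left V₂ (hWV₁ h)) (Finset.disjoint_left.1 hdisj hu)
      have hAA : A = A' := by
        by_contra hne
        exact Finset.disjoint_left.1 (hMdisj A hA A' hA' hne) hu hu''
      exact ⟨W, hW, hAA ▸ heq⟩
  -- a vertex embedded in V₂ lies in at most one used hyperedge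
  have factV₂ : ∀ u, ψ u ∈ V₂ → ∀ e ∈ G.edgeSet, ∀ e' ∈ G.edgeSet, e ≠ e' →
      ψ u ∈ φ' e → ψ u ∈ φ' e' → False := by
    intro u hu e he e' he' hne hue hue'
    have getE₀ : ∀ e ∈ G.edgeSet, ψ u ∈ φ' e →
        ∃ p ∈ G.edgeSet, (∀ x ∈ p, x ∈ S) ∧ φ p = φ' e := by
      intro e he hue
      rcases class1 e he with ⟨p, hp, hpS, hpe, -⟩ | ⟨A, hA, W, hW, heq⟩
      · exact ⟨p, hp, hpS, hpe⟩
      · exfalso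
        have h2 : ψ u ∈ A ∪ W := heq ▸ hue
        rcases Finset.mem_union.1 h2 with h | h
        · exact Finset.disjoint_left.1 (Finset.disjoint_union_right.1 (hM A hA).2).2 h hu
        · exact Finset.disjoint_left.1 h12 ((Finset.mem_powersetCard.1 hW).1 h) hu
    obtain ⟨p, hp, hpS, hpe⟩ := getE₀ e he hue
    obtain ⟨q, hq, hqS, hqe⟩ := getE₀ e' he' hue'
    have hpq : p = q := by
      by_contra hne'
      exact Finset.disjoint_left.1 (hφdisj p hp q hq hpS hqS hne')
        (Finset.mem_inter.2 ⟨hpe ▸ hue, hu⟩) (Finset.mem_inter.2 ⟨hqe ▸ hue', hu⟩)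
    have hfe : φ' e = φ' e' := by rw [← hpe, ← hqe, hpq]
    exact hne (hφ'inj he he' hfe)
  -- main lemma : no cycle can have at most one vertex embedded in V₁
  have main : ∀ (x : α) (p : G.Walk x x), p.IsCycle →
      (∀ y ∈ p.support, ψ y ∈ V₁ → y = x) → False := by
    intro x p hp hone
    obtain ⟨w, hxw, q, rfl⟩ : ∃ w, ∃ (h : G.Adj x w), ∃ (q : G.Walk w x),
        p = SimpleGraph.Walk.cons h q := by
      cases p with
      | nil => exact absurd rfl hp.ne_nil
      | cons h q => exact ⟨_, h, q, rfl⟩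
    obtain ⟨w₂, hww₂, q', rfl⟩ : ∃ w₂, ∃ (h : G.Adj w w₂), ∃ (q' : G.Walk w₂ x),
        q = SimpleGraph.Walk.cons h q' := by
      cases q with
      | nil =>
        exfalso
        have := hp.three_le_length
        simp at this
      | cons h q => exact ⟨_, h, q, rfl⟩
    have hq_nodup : (SimpleGraph.Walk.cons hww₂ q').support.Nodup := by
      simpa using hp.support_nodup
    have hone_q : ∀ y ∈ (SimpleGraph.Walk.cons hww₂ q').support, ψ y ∈ V₁ → y = x :=
      fun y hy => hone y (by simp at hy ⊢; tauto)
    have hwx : w ≠ x := hxw.ne'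
    have hwV₁ : ψ w ∉ V₁ :=
      fun h => hwx (hone_q w (SimpleGraph.Walk.start_mem_support _) h)
    have he₁ : s(x, w) ∈ G.edgeSet := hxw
    have he₂ : s(w, w₂) ∈ G.edgeSet := hww₂
    have he12 : s(x, w) ≠ s(w, w₂) := by
      have hnd := hp.isCircuit.isTrail.edges_nodup
      simp only [SimpleGraph.Walk.edges_cons] at hnd
      intro h
      exact (List.nodup_cons.1 hnd).1 (h ▸ List.mem_cons_self)
    have hwφ₁ : ψ w ∈ φ' s(x, w) := (hφ'mem _ he₁).2 w (by simp)
    have hwφ₂ : ψ w ∈ φ' s(w, w₂) := (hφ'mem _ he₂).2 w (by simp)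
    -- w is embedded in some A ∈ M
    obtain ⟨A, hA, hwA⟩ : ∃ A ∈ M, ψ w ∈ A := by
      rcases class1 _ he₁ with ⟨p₀, hp₀, hp₀S, hp₀e, hsub⟩ | ⟨A, hA, W, hW, heq⟩
      · exfalso
        rcases Finset.mem_union.1 (hsub hwφ₁) with h | h
        · exact hwV₁ h
        · exact factV₂ w h _ he₁ _ he₂ he12 hwφ₁ hwφ₂
      · refine ⟨A, hA, ?_⟩
        have h2 : ψ w ∈ A ∪ W := heq ▸ hwφ₁
        rcases Finset.mem_union.1 h2 with h | h
        · exact h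
        · exact absurd ((Finset.mem_powersetCard.1 hW).1 h) hwV₁
    -- propagate membership in A along the walk
    have chain : ∀ (u y : α) (r : G.Walk u y), r.support.Nodup →
        (∀ v ∈ r.support, ψ v ∈ V₁ → v = y) → ψ u ∈ A →
        ∀ v ∈ r.support, v = y ∨ ψ v ∈ A := by
      intro u y r
      induction r with
      | nil =>
        intro _ _ _ v hv
        left
        simpa using hv
      | @cons u' w' y' h r ih =>
        intro hnd hV ha v hv
        obtain ⟨hnd1, hnd2⟩ : u' ∉ r.support ∧ r.support.Nodup := by simpa using hnd
        rw [SimpleGraph.Walk.support_cons, List.mem_cons] at hv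
        rcases hv with rfl | hv
        · exact Or.inr ha
        · obtain ⟨W', hW', hform⟩ := factA A hA _ _ h ha
          have hmm : s(u', w') ∈ G.edgeSet := h
          have hw' : ψ w' ∈ A ∪ W' := hform ▸ (hφ'mem _ hmm).2 w' (by simp)
          rcases Finset.mem_union.1 hw' with h1 | h1
          · refine ih hnd2 (fun z hz hzV => hV z (by simp [hz]) hzV) h1 v hv
          · have hw'x : w' = y' := hV w' (by simp [SimpleGraph.Walk.start_mem_support])
              ((Finset.mem_powersetCard.1 hW').1 h1)
            subst hw'x
            cases r with
            | nil => left; simpa using hv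
            | cons h2 r2 =>
              exfalso
              obtain ⟨hh, -⟩ : w' ∉ r2.support ∧ r2.support.Nodup := by simpa using hnd2
              exact hh r2.end_mem_support
    have hloc : ∀ v ∈ (SimpleGraph.Walk.cons hxw
        (SimpleGraph.Walk.cons hww₂ q')).support, v = x ∨ ψ v ∈ A := by
      intro v hv
      rw [SimpleGraph.Walk.support_cons, List.mem_cons] at hv
      rcases hv with rfl | hv
      · exact Or.inl rfl
      · exact chain _ _ _ hq_nodup hone_q hwA v hv
    -- every edge of the cycle is mapped to a hyperedge of the form A ∪ W
    have hedge : ∀ e ∈ (SimpleGraph.Walk.cons hxw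
        (SimpleGraph.Walk.cons hww₂ q')).edges,
        ∃ W ∈ V₁.powersetCard (f - 1), φ' e = A ∪ W := by
      intro e
      induction e using Sym2.ind with
      | _ a b =>
        intro he
        have ha' := SimpleGraph.Walk.fst_mem_support_of_mem_edges _ he
        have hb' := SimpleGraph.Walk.snd_mem_support_of_mem_edges _ he
        have hAdj : G.Adj a b := SimpleGraph.Walk.edges_subset_edgeSet _ he
        rcases hloc a ha' with rfl | haA
        · rcases hloc b hb' with rfl | hbA
          · exact absurd hAdj G.irrefl
          · obtain ⟨W, hW, hform⟩ := factA A hA b a hAdj.symm hbA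
            exact ⟨W, hW, by rwa [Sym2.eq_swap]⟩
        · exact factA A hA a b hAdj haA
    -- counting
    have hcount : (SimpleGraph.Walk.cons hxw
        (SimpleGraph.Walk.cons hww₂ q')).edges.toFinset.card ≤
        ((V₁.powersetCard (f - 1)).image (fun W => A ∪ W)).card := by
      apply Finset.card_le_card_of_injOn φ'
      · intro e he
        simp only [Finset.mem_coe, List.mem_toFinset] at he ⊢
        obtain ⟨W, hW, heq⟩ := hedge e he
        exact heq ▸ Finset.mem_image_of_mem _ hW
      · intro e he e' he' hee
        rw [Finset.mem_coe, List.mem_toFinset] at he he'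
        exact hφ'inj (SimpleGraph.Walk.edges_subset_edgeSet _ he)
          (SimpleGraph.Walk.edges_subset_edgeSet _ he') hee
    have hchoose : f.choose (f - 1) = f := by
      rw [← Nat.choose_symm (Nat.sub_le f 1), Nat.sub_sub_self f_pos, Nat.choose_one_right]
    have hlen_le : (SimpleGraph.Walk.cons hxw
        (SimpleGraph.Walk.cons hww₂ q')).length ≤ f := by
      have h1 : (SimpleGraph.Walk.cons hxw
          (SimpleGraph.Walk.cons hww₂ q')).edges.toFinset.card =
          (SimpleGraph.Walk.cons hxw (SimpleGraph.Walk.cons hww₂ q')).length := by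
        rw [List.toFinset_card_of_nodup hp.isCircuit.isTrail.edges_nodup,
          SimpleGraph.Walk.length_edges]
      have h2 : ((V₁.powersetCard (f - 1)).image (fun W => A ∪ W)).card ≤ f := by
        calc ((V₁.powersetCard (f - 1)).image (fun W => A ∪ W)).card
            ≤ (V₁.powersetCard (f - 1)).card := Finset.card_image_le
          _ = f := by rw [Finset.card_powersetCard, hV₁, hchoose]
      omega
    -- the girth bound gives the contradiction
    have hgirth : (G.girth : ℕ∞) = G.egirth :=
      ENat.coe_toNat (fun h => hcyc (SimpleGraph.egirth_eq_top.1 h))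
    have hge : G.egirth ≤ ((SimpleGraph.Walk.cons hxw
        (SimpleGraph.Walk.cons hww₂ q')).length : ℕ∞) :=
      iInf_le_of_le x (iInf_le_of_le _ (iInf_le _ hp))
    have hflt : (f : ℕ∞) < ((SimpleGraph.Walk.cons hxw
        (SimpleGraph.Walk.cons hww₂ q')).length : ℕ∞) :=
      lt_of_lt_of_le (hgirth ▸ hfg) hge
    have hxx : f < (SimpleGraph.Walk.cons hxw
        (SimpleGraph.Walk.cons hww₂ q')).length := by exact_mod_cast hflt
    omega
  -- extract a cycle avoiding a given vertex set
  have getCycle : ∀ s : Finset α, ¬ (G.induce ((↑s : Set α)ᶜ)).IsAcyclic →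
      ∃ (v : α) (c : G.Walk v v), c.IsCycle ∧ ∀ y ∈ c.support, y ∉ s := by
    intro s hs
    have hex : ∃ (v : ((↑s : Set α)ᶜ : Set α)) (c : (G.induce ((↑s : Set α)ᶜ)).Walk v v),
        c.IsCycle := by
      by_contra h
      push_neg at h
      exact hs (fun v c => h v c)
    obtain ⟨v, c, hc⟩ := hex
    refine ⟨v.1, c.map (SimpleGraph.Embedding.induce _).toHom,
      hc.map Subtype.val_injective, ?_⟩
    intro y hy
    replace hy : y ∈ (c.map (SimpleGraph.Embedding.induce ((↑s : Set α)ᶜ)).toHom).support := hy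
    rw [SimpleGraph.Walk.support_map, List.mem_map] at hy
    obtain ⟨⟨y', hy'⟩, -, rfl⟩ := hy
    exact fun h => hy' (by simpa using h)
  -- the set of vertices embedded into V₁
  set T : Finset α := Finset.univ.filter (fun a => ψ a ∈ V₁) with hTdef
  have hTcard : T.card ≤ f := by
    rw [← hV₁, ← Finset.card_image_of_injective T hψ]
    apply Finset.card_le_card
    intro v hv
    rw [Finset.mem_image] at hv
    obtain ⟨a, ha, rfl⟩ := hv
    exact (Finset.mem_filter.1 ha).2
  by_cases hcase : T.card = f
  · -- T is a minimum feedback set; remove one vertex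
    obtain ⟨x, hx⟩ : T.Nonempty := Finset.card_pos.1 (by omega)
    have hnotfeed : ¬ (G.induce ((↑(T.erase x) : Set α)ᶜ)).IsAcyclic := by
      intro hfeed
      have h2 : sInf {m : ℕ | ∃ s : Finset α, s.card = m ∧
          (G.induce ((↑s : Set α)ᶜ)).IsAcyclic} ≤ (T.erase x).card :=
        Nat.sInf_le ⟨T.erase x, rfl, hfeed⟩
      have h3 : feedbackNum G ≤ (T.erase x).card := h2
      rw [Finset.card_erase_of_mem hx, hcase] at h3
      omega
    obtain ⟨v, c, hc, hcav⟩ := getCycle _ hnotfeed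
    have hone : ∀ y ∈ c.support, ψ y ∈ V₁ → y = x := by
      intro y hy hyV
      by_contra hne
      exact hcav y hy (Finset.mem_erase.2 ⟨hne, Finset.mem_filter.2 ⟨Finset.mem_univ _, hyV⟩⟩)
    by_cases hxs : x ∈ c.support
    · refine main x (c.rotate x hxs) (hc.rotate hxs) ?_
      intro y hy hyV
      rw [SimpleGraph.Walk.support_eq_cons, List.mem_cons] at hy
      rcases hy with rfl | hy
      · rfl
      · have hy2 : y ∈ c.support.tail :=
          ((SimpleGraph.Walk.support_rotate c x hxs).perm.mem_iff).1 hy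
        exact hone y (List.mem_of_mem_tail hy2) hyV
    · refine main v c hc ?_
      intro y hy hyV
      exact absurd ((hone y hy hyV) ▸ hy) hxs
  · have hlt : T.card < f := lt_of_le_of_ne hTcard hcase
    have hnotfeed : ¬ (G.induce ((↑T : Set α)ᶜ)).IsAcyclic := by
      intro hfeed
      have h2 : sInf {m : ℕ | ∃ s : Finset α, s.card = m ∧
          (G.induce ((↑s : Set α)ᶜ)).IsAcyclic} ≤ T.card :=
        Nat.sInf_le ⟨T, rfl, hfeed⟩
      have h3 : feedbackNum G ≤ T.card := h2
      omega
    obtain ⟨v, c, hc, hcav⟩ := getCycle _ hnotfeed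
    refine main v c hc ?_
    intro y hy hyV
    exact absurd (Finset.mem_filter.2 ⟨Finset.mem_univ y, hyV⟩ : y ∈ T) (hcav y hy)
end

section
/- For n ≥ 10 and k = 3, ℓ = 4: sat_3(n, Berge-K₄) ≤ n if n is odd, and sat_3(n, Berge-K₄) ≤ n + 1 if n is even. -/
set_option linter.unusedSectionVars false
set_option maxHeartbeats 1000000

section Sat
variable {V : Type*} [DecidableEq V]

structure SatGood (a b c : V) (f : V → V) (T : Finset V) : Prop where
  hab : a ≠ b
  hca : c ≠ a
  hcb : c ≠ b
  hfa : ∀ x, x ≠ a → x ≠ b → f x ≠ a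
  hfb : ∀ x, x ≠ a → x ≠ b → f x ≠ b
  hfx : ∀ x, x ≠ a → x ≠ b → f x ≠ x
  hfc : ∀ x, x ≠ a → x ≠ b → x ≠ c → f x ≠ c
  hinv : ∀ x, x ≠ a → x ≠ b → f (f x) = x ∨ f x = f c
  hTa : ∀ t ∈ T, t ≠ a
  hTb : ∀ t ∈ T, t ≠ b
  hTmem : ∀ x, x ≠ a → x ≠ b → x ∈ T ∨ (f x ∈ T ∧ f (f x) = x)

def satH (a b c : V) (f : V → V) (T : Finset V) : Finset (Finset V) :=
  insert {a, b, c} ((T.image fun x => {x, f x, a}) ∪ (T.image fun x => {x, f x, b}))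

variable {a b c : V} {f : V → V} {T : Finset V}

lemma SatGood.shape (hg : SatGood a b c f T) {h : Finset V} (hh : h ∈ satH a b c f T) :
    h = {a, b, c} ∨ ∃ t, t ≠ a ∧ t ≠ b ∧ (h = {t, f t, a} ∨ h = {t, f t, b}) := by
  unfold satH at hh
  rcases Finset.mem_insert.mp hh with h1 | h1
  · exact Or.inl h1
  · rcases Finset.mem_union.mp h1 with h2 | h2
    · obtain ⟨t, ht, rfl⟩ := Finset.mem_image.mp h2
      exact Or.inr ⟨t, hg.hTa t ht, hg.hTb t ht, Or.inl rfl⟩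
    · obtain ⟨t, ht, rfl⟩ := Finset.mem_image.mp h2
      exact Or.inr ⟨t, hg.hTa t ht, hg.hTb t ht, Or.inr rfl⟩

lemma SatGood.memABC : ({a, b, c} : Finset V) ∈ satH a b c f T :=
  Finset.mem_insert_self _ _

lemma SatGood.memA (hg : SatGood a b c f T) {x : V} (hxa : x ≠ a) (hxb : x ≠ b) :
    ({x, f x, a} : Finset V) ∈ satH a b c f T := by
  rcases hg.hTmem x hxa hxb with ht | ⟨ht, hff⟩
  · exact Finset.mem_insert_of_mem <| Finset.mem_union_left _ <|
      Finset.mem_image.mpr ⟨x, ht, rfl⟩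
  · refine Finset.mem_insert_of_mem <| Finset.mem_union_left _ <|
      Finset.mem_image.mpr ⟨f x, ht, ?_⟩
    rw [hff]; ext w; simp; tauto

lemma SatGood.memB (hg : SatGood a b c f T) {x : V} (hxa : x ≠ a) (hxb : x ≠ b) :
    ({x, f x, b} : Finset V) ∈ satH a b c f T := by
  rcases hg.hTmem x hxa hxb with ht | ⟨ht, hff⟩
  · exact Finset.mem_insert_of_mem <| Finset.mem_union_right _ <|
      Finset.mem_image.mpr ⟨x, ht, rfl⟩
  · refine Finset.mem_insert_of_mem <| Finset.mem_union_right _ <|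
      Finset.mem_image.mpr ⟨f x, ht, ?_⟩
    rw [hff]; ext w; simp; tauto

lemma SatGood.cardH (hg : SatGood a b c f T) {h : Finset V} (hh : h ∈ satH a b c f T) :
    h.card = 3 := by
  rcases hg.shape hh with rfl | ⟨t, hta, htb, rfl | rfl⟩
  · rw [Finset.card_insert_of_notMem (by simp [hg.hab, hg.hca.symm]),
      Finset.card_insert_of_notMem (by simp [hg.hcb.symm]), Finset.card_singleton]
  · rw [Finset.card_insert_of_notMem (by simp [hta, (hg.hfx t hta htb).symm]),
      Finset.card_insert_of_notMem (by simp [hg.hfa t hta htb]), Finset.card_singleton]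
  · rw [Finset.card_insert_of_notMem (by simp [htb, (hg.hfx t hta htb).symm]),
      Finset.card_insert_of_notMem (by simp [hg.hfb t hta htb]), Finset.card_singleton]

lemma SatGood.pairM (hg : SatGood a b c f T) {h : Finset V} {x y : V}
    (hh : h ∈ satH a b c f T) (hx : x ∈ h) (hy : y ∈ h)
    (hxa : x ≠ a) (hxb : x ≠ b) (hya : y ≠ a) (hyb : y ≠ b) (hxy : x ≠ y) :
    f x = y ∨ f y = x := by
  rcases hg.shape hh with rfl | ⟨t, hta, htb, rfl | rfl⟩
  · simp only [Finset.mem_insert, Finset.mem_singleton] at hx hy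
    rcases hx with rfl | rfl | rfl <;> rcases hy with rfl | rfl | rfl <;> simp_all
  all_goals {
    simp only [Finset.mem_insert, Finset.mem_singleton] at hx hy
    rcases hx with rfl | rfl | rfl <;> rcases hy with rfl | rfl | rfl <;> simp_all }

lemma SatGood.tri (hg : SatGood a b c f T) {x y z : V}
    (hxa : x ≠ a) (hxb : x ≠ b) (hya : y ≠ a) (hyb : y ≠ b) (hza : z ≠ a) (hzb : z ≠ b)
    (hxy : x ≠ y) (hyz : y ≠ z) (hxz : x ≠ z)
    (m1 : f x = y ∨ f y = x) (m2 : f y = z ∨ f z = y) (m3 : f x = z ∨ f z = x) :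
    False := by
  rcases m1 with h1 | h1 <;> rcases m2 with h2 | h2 <;> rcases m3 with h3 | h3
  · exact hyz (h1.symm.trans h3)
  · -- cycle fx=y, fy=z, fz=x
    rcases hg.hinv x hxa hxb with hx | hx
    · rw [h1] at hx; exact hxz (hx.symm.trans h2)
    · have hy1 : y = f c := by rw [← h1, hx]
      rcases hg.hinv y hya hyb with hyy | hyy
      · rw [h2] at hyy; exact hxy (h3.symm.trans hyy)
      · have hz1 : z = f c := by rw [← h2, hyy]
        exact hyz (hy1.trans hz1.symm)
  · exact hyz (h1.symm.trans h3)
  · exact hxy (h3.symm.trans h2)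
  · exact hxz (h1.symm.trans h2)
  · exact hxz (h1.symm.trans h2)
  · -- cycle fy=x, fz=y, fx=z
    rcases hg.hinv x hxa hxb with hx | hx
    · rw [h3] at hx; exact hxy (hx.symm.trans h2)
    · have hz1 : z = f c := by rw [← h3, hx]
      rcases hg.hinv z hza hzb with hzz | hzz
      · rw [h2] at hzz; exact hxz (h1.symm.trans hzz)
      · have hy1 : y = f c := by rw [← h2, hzz]
        exact hyz (hy1.trans hz1.symm)
  · exact hxy (h3.symm.trans h2)


lemma SatGood.FT (hg : SatGood a b c f T) {core : Finset V} {φ : Sym2 V → Finset V}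
    {p q : V}
    (hinj : Set.InjOn φ {s : Sym2 V | ∃ x ∈ core, ∃ y ∈ core, x ≠ y ∧ s = s(x, y)})
    (hcov : ∀ x ∈ core, ∀ y ∈ core, x ≠ y →
      φ s(x, y) ∈ satH a b c f T ∧ x ∈ φ s(x, y) ∧ y ∈ φ s(x, y))
    (haC : a ∈ core) (hbC : b ∈ core) (hpC : p ∈ core) (hqC : q ∈ core)
    (hpa : p ≠ a) (hpb : p ≠ b) (hqa : q ≠ a) (hqb : q ≠ b) (hpq : p ≠ q)
    (hpc : p ≠ c) (hpfc : p ≠ f c) (hfp : f p = q) : False := by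
  obtain ⟨m1, ha1, hp1⟩ := hcov a haC p hpC (Ne.symm hpa)
  obtain ⟨m2, hb2, hp2⟩ := hcov b hbC p hpC (Ne.symm hpb)
  obtain ⟨m3, hp3, hq3⟩ := hcov p hpC q hqC hpq
  have c1 : φ s(a, p) = {p, q, a} := by
    rcases hg.shape m1 with he | ⟨t, hta, htb, he | he⟩
    · rw [he] at hp1
      simp only [Finset.mem_insert, Finset.mem_singleton] at hp1
      tauto
    · rw [he] at hp1 ⊢
      simp only [Finset.mem_insert, Finset.mem_singleton] at hp1
      rcases hp1 with rfl | hp1 | hp1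
      · rw [hfp]
      · rcases hg.hinv t hta htb with htt | htt
        · have htq : t = q := by rw [← htt, ← hp1, hfp]
          have hft : f t = p := hp1.symm
          rw [hft, htq]
          ext w; simp; tauto
        · exact absurd (hp1.trans htt) hpfc
      · exact absurd hp1 hpa
    · rw [he] at ha1
      simp only [Finset.mem_insert, Finset.mem_singleton] at ha1
      rcases ha1 with h | h | h
      exacts [absurd h.symm hta, absurd h.symm (hg.hfa t hta htb), absurd h hg.hab]
  have c2 : φ s(b, p) = {p, q, b} := by
    rcases hg.shape m2 with he | ⟨t, hta, htb, he | he⟩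
    · rw [he] at hp2
      simp only [Finset.mem_insert, Finset.mem_singleton] at hp2
      tauto
    · rw [he] at hb2
      simp only [Finset.mem_insert, Finset.mem_singleton] at hb2
      rcases hb2 with h | h | h
      exacts [absurd h.symm htb, absurd h.symm (hg.hfb t hta htb), absurd h.symm hg.hab]
    · rw [he] at hp2 ⊢
      simp only [Finset.mem_insert, Finset.mem_singleton] at hp2
      rcases hp2 with rfl | hp2 | hp2
      · rw [hfp]
      · rcases hg.hinv t hta htb with htt | htt
        · have htq : t = q := by rw [← htt, ← hp2, hfp]
          have hft : f t = p := hp2.symm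
          rw [hft, htq]
          ext w; simp; tauto
        · exact absurd (hp2.trans htt) hpfc
      · exact absurd hp2 hpb
  have c3 : φ s(p, q) = {p, q, a} ∨ φ s(p, q) = {p, q, b} := by
    rcases hg.shape m3 with he | ⟨t, hta, htb, he | he⟩
    · rw [he] at hp3
      simp only [Finset.mem_insert, Finset.mem_singleton] at hp3
      tauto
    · rw [he] at hp3 hq3 ⊢
      simp only [Finset.mem_insert, Finset.mem_singleton] at hp3 hq3
      rcases hp3 with rfl | hp3 | hp3
      · rcases hq3 with rfl | hq3 | hq3
        · exact absurd rfl hpq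
        · left; rw [hq3]
        · exact absurd hq3 hqa
      · rcases hq3 with rfl | hq3 | hq3
        · left; rw [hp3]; ext w; simp; tauto
        · exact absurd (hp3.trans hq3.symm) hpq
        · exact absurd hq3 hqa
      · exact absurd hp3 hpa
    · rw [he] at hp3 hq3 ⊢
      simp only [Finset.mem_insert, Finset.mem_singleton] at hp3 hq3
      rcases hp3 with rfl | hp3 | hp3
      · rcases hq3 with rfl | hq3 | hq3
        · exact absurd rfl hpq
        · right; rw [hq3]
        · exact absurd hq3 hqb
      · rcases hq3 with rfl | hq3 | hq3
        · right; rw [hp3]; ext w; simp; tauto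
        · exact absurd (hp3.trans hq3.symm) hpq
        · exact absurd hq3 hqb
      · exact absurd hp3 hpb
  have dpq : s(p, q) ∈ {s : Sym2 V | ∃ x ∈ core, ∃ y ∈ core, x ≠ y ∧ s = s(x, y)} :=
    ⟨p, hpC, q, hqC, hpq, rfl⟩
  rcases c3 with h | h
  · have := hinj dpq ⟨a, haC, p, hpC, Ne.symm hpa, rfl⟩ (h.trans c1.symm)
    rw [Sym2.eq_iff] at this
    tauto
  · have := hinj dpq ⟨b, hbC, p, hpC, Ne.symm hpb, rfl⟩ (h.trans c2.symm)
    rw [Sym2.eq_iff] at this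
    tauto

lemma SatGood.ABCD (hg : SatGood a b c f T) {core : Finset V} {φ : Sym2 V → Finset V}
    (hinj : Set.InjOn φ {s : Sym2 V | ∃ x ∈ core, ∃ y ∈ core, x ≠ y ∧ s = s(x, y)})
    (hcov : ∀ x ∈ core, ∀ y ∈ core, x ≠ y →
      φ s(x, y) ∈ satH a b c f T ∧ x ∈ φ s(x, y) ∧ y ∈ φ s(x, y))
    (haC : a ∈ core) (hbC : b ∈ core) (hcC : c ∈ core) (hdC : f c ∈ core) : False := by
  have hda : f c ≠ a := hg.hfa c hg.hca hg.hcb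
  have hdb : f c ≠ b := hg.hfb c hg.hca hg.hcb
  have hdc : f c ≠ c := hg.hfx c hg.hca hg.hcb
  obtain ⟨m1, ha1, hb1⟩ := hcov a haC b hbC hg.hab
  obtain ⟨m2, ha2, hc2⟩ := hcov a haC c hcC (Ne.symm hg.hca)
  obtain ⟨m3, hb3, hc3⟩ := hcov b hbC c hcC (Ne.symm hg.hcb)
  obtain ⟨m4, hc4, hd4⟩ := hcov c hcC (f c) hdC (Ne.symm hdc)
  have c1 : φ s(a, b) = {a, b, c} := by
    rcases hg.shape m1 with he | ⟨t, hta, htb, he | he⟩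
    · exact he
    · rw [he] at hb1
      simp only [Finset.mem_insert, Finset.mem_singleton] at hb1
      rcases hb1 with h | h | h
      exacts [absurd h.symm htb, absurd h.symm (hg.hfb t hta htb), absurd h.symm hg.hab]
    · rw [he] at ha1
      simp only [Finset.mem_insert, Finset.mem_singleton] at ha1
      rcases ha1 with h | h | h
      exacts [absurd h.symm hta, absurd h.symm (hg.hfa t hta htb), absurd h hg.hab]
  have c2 : φ s(a, c) = {a, b, c} ∨ φ s(a, c) = {c, f c, a} := by
    rcases hg.shape m2 with he | ⟨t, hta, htb, he | he⟩
    · exact Or.inl he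
    · rw [he] at hc2 ⊢
      simp only [Finset.mem_insert, Finset.mem_singleton] at hc2
      rcases hc2 with rfl | hc2 | hc2
      · exact Or.inr rfl
      · by_cases htc : t = c
        · subst htc; exact absurd hc2.symm hdc
        · exact absurd hc2.symm (hg.hfc t hta htb htc)
      · exact absurd hc2 hg.hca
    · rw [he] at ha2
      simp only [Finset.mem_insert, Finset.mem_singleton] at ha2
      rcases ha2 with h | h | h
      exacts [absurd h.symm hta, absurd h.symm (hg.hfa t hta htb), absurd h hg.hab]
  have c3 : φ s(b, c) = {a, b, c} ∨ φ s(b, c) = {c, f c, b} := by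
    rcases hg.shape m3 with he | ⟨t, hta, htb, he | he⟩
    · exact Or.inl he
    · rw [he] at hb3
      simp only [Finset.mem_insert, Finset.mem_singleton] at hb3
      rcases hb3 with h | h | h
      exacts [absurd h.symm htb, absurd h.symm (hg.hfb t hta htb), absurd h.symm hg.hab]
    · rw [he] at hc3 ⊢
      simp only [Finset.mem_insert, Finset.mem_singleton] at hc3
      rcases hc3 with rfl | hc3 | hc3
      · exact Or.inr rfl
      · by_cases htc : t = c
        · subst htc; exact absurd hc3.symm hdc
        · exact absurd hc3.symm (hg.hfc t hta htb htc)
      · exact absurd hc3 hg.hcb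
  have c4 : φ s(c, f c) = {c, f c, a} ∨ φ s(c, f c) = {c, f c, b} := by
    rcases hg.shape m4 with he | ⟨t, hta, htb, he | he⟩
    · rw [he] at hd4
      simp only [Finset.mem_insert, Finset.mem_singleton] at hd4
      tauto
    · rw [he] at hc4 ⊢
      simp only [Finset.mem_insert, Finset.mem_singleton] at hc4
      rcases hc4 with rfl | hc4 | hc4
      · exact Or.inl rfl
      · by_cases htc : t = c
        · subst htc; exact absurd hc4.symm hdc
        · exact absurd hc4.symm (hg.hfc t hta htb htc)
      · exact absurd hc4 hg.hca
    · rw [he] at hc4 ⊢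
      simp only [Finset.mem_insert, Finset.mem_singleton] at hc4
      rcases hc4 with rfl | hc4 | hc4
      · exact Or.inr rfl
      · by_cases htc : t = c
        · subst htc; exact absurd hc4.symm hdc
        · exact absurd hc4.symm (hg.hfc t hta htb htc)
      · exact absurd hc4 hg.hcb
  have dab : s(a, b) ∈ {s : Sym2 V | ∃ x ∈ core, ∃ y ∈ core, x ≠ y ∧ s = s(x, y)} :=
    ⟨a, haC, b, hbC, hg.hab, rfl⟩
  have dac : s(a, c) ∈ {s : Sym2 V | ∃ x ∈ core, ∃ y ∈ core, x ≠ y ∧ s = s(x, y)} :=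
    ⟨a, haC, c, hcC, Ne.symm hg.hca, rfl⟩
  have dbc : s(b, c) ∈ {s : Sym2 V | ∃ x ∈ core, ∃ y ∈ core, x ≠ y ∧ s = s(x, y)} :=
    ⟨b, hbC, c, hcC, Ne.symm hg.hcb, rfl⟩
  have dcd : s(c, f c) ∈ {s : Sym2 V | ∃ x ∈ core, ∃ y ∈ core, x ≠ y ∧ s = s(x, y)} :=
    ⟨c, hcC, f c, hdC, Ne.symm hdc, rfl⟩
  have e2 : φ s(a, c) = {c, f c, a} := by
    rcases c2 with h | h
    · have := hinj dac dab (h.trans c1.symm)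
      rw [Sym2.eq_iff] at this
      rcases this with ⟨_, h2⟩ | ⟨h1, _⟩
      exacts [absurd h2 hg.hcb, absurd h1 hg.hab]
    · exact h
  have e3 : φ s(b, c) = {c, f c, b} := by
    rcases c3 with h | h
    · have := hinj dbc dab (h.trans c1.symm)
      rw [Sym2.eq_iff] at this
      rcases this with ⟨h1, _⟩ | ⟨h1, h2⟩
      exacts [absurd h1 hg.hab.symm, absurd h2 hg.hca]
    · exact h
  rcases c4 with h | h
  · have := hinj dcd dac (h.trans e2.symm)
    rw [Sym2.eq_iff] at this
    rcases this with ⟨h1, _⟩ | ⟨_, h2⟩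
    exacts [absurd h1 hg.hca, absurd h2 hda]
  · have := hinj dcd dbc (h.trans e3.symm)
    rw [Sym2.eq_iff] at this
    rcases this with ⟨h1, _⟩ | ⟨_, h2⟩
    exacts [absurd h1 hg.hcb, absurd h2 hdb]


lemma SatGood.noBerge (hg : SatGood a b c f T) : ¬ HasBergeClique 4 (satH a b c f T) := by
  rintro ⟨core, hcard, φ, hinj, hcov⟩
  have hM : ∀ x ∈ core, ∀ y ∈ core, x ≠ a → x ≠ b → y ≠ a → y ≠ b → x ≠ y →
      f x = y ∨ f y = x := by
    intro x hx y hy hxa hxb hya hyb hxy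
    obtain ⟨mh, hxm, hym⟩ := hcov x hx y hy hxy
    exact hg.pairM mh hxm hym hxa hxb hya hyb hxy
  have hstep1 : ∀ w ∈ ({a, b} : Finset V), w ∉ core → False := by
    intro w hwab hw
    have hsub : core ∩ {a, b} ⊆ ({a, b} : Finset V).erase w := by
      intro u hu
      rw [Finset.mem_erase]
      refine ⟨fun h => hw (h ▸ (Finset.mem_inter.mp hu).1), (Finset.mem_inter.mp hu).2⟩
    have hc1 : (core ∩ {a, b}).card ≤ 1 := by
      have := Finset.card_le_card hsub
      have h2 : (({a, b} : Finset V).erase w).card ≤ ({a, b} : Finset V).card - 1 := by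
        rcases Finset.mem_insert.mp hwab with rfl | hwb
        · rw [Finset.card_erase_of_mem (Finset.mem_insert_self _ _)]
        · rw [Finset.card_erase_of_mem hwab]
      have h3 : ({a, b} : Finset V).card ≤ 2 := Finset.card_insert_le _ _ |>.trans (by simp)
      omega
    have hc2 : (core \ {a, b}).card + (core ∩ {a, b}).card = core.card :=
      Finset.card_sdiff_add_card_inter _ _
    have h3 : 3 ≤ (core \ {a, b}).card := by omega
    obtain ⟨t, hts, htc⟩ := Finset.exists_subset_card_eq h3
    obtain ⟨x, y, z, hxy, hxz, hyz, rfl⟩ := Finset.card_eq_three.mp htc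
    have hx := hts (by simp : x ∈ ({x, y, z} : Finset V))
    have hy := hts (by simp : y ∈ ({x, y, z} : Finset V))
    have hz := hts (by simp : z ∈ ({x, y, z} : Finset V))
    rw [Finset.mem_sdiff, Finset.mem_insert, Finset.mem_singleton] at hx hy hz
    obtain ⟨hxC, hxab⟩ := hx
    obtain ⟨hyC, hyab⟩ := hy
    obtain ⟨hzC, hzab⟩ := hz
    push_neg at hxab hyab hzab
    exact hg.tri hxab.1 hxab.2 hyab.1 hyab.2 hzab.1 hzab.2 hxy hyz hxz
      (hM x hxC y hyC hxab.1 hxab.2 hyab.1 hyab.2 hxy)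
      (hM y hyC z hzC hyab.1 hyab.2 hzab.1 hzab.2 hyz)
      (hM x hxC z hzC hxab.1 hxab.2 hzab.1 hzab.2 hxz)
  have haC : a ∈ core := by
    by_contra h; exact hstep1 a (by simp) h
  have hbC : b ∈ core := by
    by_contra h; exact hstep1 b (by simp) h
  have h2 : ((core.erase a).erase b).card = 2 := by
    rw [Finset.card_erase_of_mem (Finset.mem_erase.mpr ⟨hg.hab.symm, hbC⟩),
      Finset.card_erase_of_mem haC, hcard]
  obtain ⟨x, y, hxy, hset⟩ := Finset.card_eq_two.mp h2
  have hx : x ∈ (core.erase a).erase b := by rw [hset]; simp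
  have hy : y ∈ (core.erase a).erase b := by rw [hset]; simp
  rw [Finset.mem_erase, Finset.mem_erase] at hx hy
  obtain ⟨hxb, hxa, hxC⟩ := hx
  obtain ⟨hyb, hya, hyC⟩ := hy
  have key : ∀ p q : V, p ∈ core → q ∈ core → p ≠ a → p ≠ b → q ≠ a → q ≠ b →
      p ≠ q → f p = q → False := by
    intro p q hpC hqC hpa hpb hqa hqb hpq hfp
    by_cases hpc : p = c
    · subst hpc
      exact hg.ABCD hinj hcov haC hbC hpC (hfp ▸ hqC)
    · by_cases hpfc : p = f c
      · rcases hg.hinv p hpa hpb with hq | hq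
        · rw [hfp] at hq
          have hqc : q ≠ c := by
            rw [← hfp]; exact hg.hfc p hpa hpb hpc
          have hqfc : q ≠ f c := by rw [← hpfc]; exact hpq.symm
          exact hg.FT hinj hcov haC hbC hqC hpC hqa hqb hpa hpb hpq.symm hqc hqfc hq
        · exact hpq (hpfc.trans (hq.symm.trans hfp))
      · exact hg.FT hinj hcov haC hbC hpC hqC hpa hpb hqa hqb hpq hpc hpfc hfp
  rcases hM x hxC y hyC hxa hxb hya hyb hxy with h | h
  · exact key x y hxC hyC hxa hxb hya hyb hxy h
  · exact key y x hyC hxC hya hyb hxa hxb hxy.symm h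

lemma mkBerge (H : Finset (Finset V)) (v1 v2 v3 v4 : V)
    (e12 e13 e14 e23 e24 e34 : Finset V)
    (h12 : v1 ≠ v2) (h13 : v1 ≠ v3) (h14 : v1 ≠ v4)
    (h23 : v2 ≠ v3) (h24 : v2 ≠ v4) (h34 : v3 ≠ v4)
    (m12 : e12 ∈ H) (m13 : e13 ∈ H) (m14 : e14 ∈ H)
    (m23 : e23 ∈ H) (m24 : e24 ∈ H) (m34 : e34 ∈ H)
    (c121 : v1 ∈ e12) (c122 : v2 ∈ e12) (c131 : v1 ∈ e13) (c133 : v3 ∈ e13)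
    (c141 : v1 ∈ e14) (c144 : v4 ∈ e14) (c232 : v2 ∈ e23) (c233 : v3 ∈ e23)
    (c242 : v2 ∈ e24) (c244 : v4 ∈ e24) (c343 : v3 ∈ e34) (c344 : v4 ∈ e34)
    (d1 : e12 ≠ e13) (d2 : e12 ≠ e14) (d3 : e12 ≠ e23) (d4 : e12 ≠ e24) (d5 : e12 ≠ e34)
    (d6 : e13 ≠ e14) (d7 : e13 ≠ e23) (d8 : e13 ≠ e24) (d9 : e13 ≠ e34)
    (d10 : e14 ≠ e23) (d11 : e14 ≠ e24) (d12 : e14 ≠ e34)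
    (d13 : e23 ≠ e24) (d14 : e23 ≠ e34) (d15 : e24 ≠ e34) :
    HasBergeClique 4 H := by
  classical
  set φ : Sym2 V → Finset V := fun s =>
    if s = s(v1, v2) then e12 else if s = s(v1, v3) then e13
    else if s = s(v1, v4) then e14 else if s = s(v2, v3) then e23
    else if s = s(v2, v4) then e24 else e34 with hφ
  have sne : ∀ (x y u v : V), ((x ≠ u ∨ y ≠ v) ∧ (x ≠ v ∨ y ≠ u)) → s(x, y) ≠ s(u, v) := by
    intro x y u v h
    rw [Ne, Sym2.eq_iff]
    tauto
  have E12 : φ s(v1, v2) = e12 := by rw [hφ]; beta_reduce; rw [if_pos rfl]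
  have E13 : φ s(v1, v3) = e13 := by
    rw [hφ]; beta_reduce
    rw [if_neg (sne _ _ _ _ ⟨Or.inr (Ne.symm h23), Or.inl h12⟩), if_pos rfl]
  have E14 : φ s(v1, v4) = e14 := by
    rw [hφ]; beta_reduce
    rw [if_neg (sne _ _ _ _ ⟨Or.inr (Ne.symm h24), Or.inl h12⟩),
      if_neg (sne _ _ _ _ ⟨Or.inr (Ne.symm h34), Or.inl h13⟩), if_pos rfl]
  have E23 : φ s(v2, v3) = e23 := by
    rw [hφ]; beta_reduce
    rw [if_neg (sne _ _ _ _ ⟨Or.inl (Ne.symm h12), Or.inr (Ne.symm h13)⟩),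
      if_neg (sne _ _ _ _ ⟨Or.inl (Ne.symm h12), Or.inl h23⟩),
      if_neg (sne _ _ _ _ ⟨Or.inl (Ne.symm h12), Or.inl h24⟩), if_pos rfl]
  have E24 : φ s(v2, v4) = e24 := by
    rw [hφ]; beta_reduce
    rw [if_neg (sne _ _ _ _ ⟨Or.inl (Ne.symm h12), Or.inr (Ne.symm h14)⟩),
      if_neg (sne _ _ _ _ ⟨Or.inl (Ne.symm h12), Or.inl h23⟩),
      if_neg (sne _ _ _ _ ⟨Or.inl (Ne.symm h12), Or.inl h24⟩),
      if_neg (sne _ _ _ _ ⟨Or.inr (Ne.symm h34), Or.inl h23⟩), if_pos rfl]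
  have E34 : φ s(v3, v4) = e34 := by
    rw [hφ]; beta_reduce
    rw [if_neg (sne _ _ _ _ ⟨Or.inl (Ne.symm h13), Or.inr (Ne.symm h14)⟩),
      if_neg (sne _ _ _ _ ⟨Or.inl (Ne.symm h13), Or.inr (Ne.symm h14)⟩),
      if_neg (sne _ _ _ _ ⟨Or.inl (Ne.symm h13), Or.inl h34⟩),
      if_neg (sne _ _ _ _ ⟨Or.inl (Ne.symm h23), Or.inr (Ne.symm h24)⟩),
      if_neg (sne _ _ _ _ ⟨Or.inl (Ne.symm h23), Or.inl h34⟩)]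
  have hcore4 : ({v1, v2, v3, v4} : Finset V).card = 4 := by
    rw [Finset.card_insert_of_notMem (by simp [h12, h13, h14]),
      Finset.card_insert_of_notMem (by simp [h23, h24]),
      Finset.card_insert_of_notMem (by simp [h34]), Finset.card_singleton]
  refine ⟨{v1, v2, v3, v4}, hcore4, φ, ?_, ?_⟩
  · -- InjOn
    have memchar : ∀ p ∈ {p : Sym2 V | ∃ x ∈ ({v1, v2, v3, v4} : Finset V),
        ∃ y ∈ ({v1, v2, v3, v4} : Finset V), x ≠ y ∧ p = s(x, y)},
        p = s(v1, v2) ∨ p = s(v1, v3) ∨ p = s(v1, v4) ∨ p = s(v2, v3) ∨ p = s(v2, v4) ∨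
        p = s(v3, v4) := by
      rintro p ⟨x, hx, y, hy, hxy, rfl⟩
      simp only [Finset.mem_insert, Finset.mem_singleton] at hx hy
      rcases hx with rfl | rfl | rfl | rfl
      · rcases hy with rfl | rfl | rfl | rfl
        · exact absurd rfl hxy
        · exact Or.inl rfl
        · exact Or.inr (Or.inl rfl)
        · exact Or.inr (Or.inr (Or.inl rfl))
      · rcases hy with rfl | rfl | rfl | rfl
        · rw [Sym2.eq_swap]; exact Or.inl rfl
        · exact absurd rfl hxy
        · exact Or.inr (Or.inr (Or.inr (Or.inl rfl)))
        · exact Or.inr (Or.inr (Or.inr (Or.inr (Or.inl rfl))))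
      · rcases hy with rfl | rfl | rfl | rfl
        · rw [Sym2.eq_swap]; exact Or.inr (Or.inl rfl)
        · rw [Sym2.eq_swap]; exact Or.inr (Or.inr (Or.inr (Or.inl rfl)))
        · exact absurd rfl hxy
        · exact Or.inr (Or.inr (Or.inr (Or.inr (Or.inr rfl))))
      · rcases hy with rfl | rfl | rfl | rfl
        · rw [Sym2.eq_swap]; exact Or.inr (Or.inr (Or.inl rfl))
        · rw [Sym2.eq_swap]; exact Or.inr (Or.inr (Or.inr (Or.inr (Or.inl rfl))))
        · rw [Sym2.eq_swap]; exact Or.inr (Or.inr (Or.inr (Or.inr (Or.inr rfl))))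
        · exact absurd rfl hxy
    intro p hp q hq hpq
    rcases memchar p hp with rfl | rfl | rfl | rfl | rfl | rfl
    · rcases memchar q hq with rfl | rfl | rfl | rfl | rfl | rfl
      · rfl
      · rw [E12, E13] at hpq; exact absurd hpq d1
      · rw [E12, E14] at hpq; exact absurd hpq d2
      · rw [E12, E23] at hpq; exact absurd hpq d3
      · rw [E12, E24] at hpq; exact absurd hpq d4
      · rw [E12, E34] at hpq; exact absurd hpq d5
    · rcases memchar q hq with rfl | rfl | rfl | rfl | rfl | rfl
      · rw [E13, E12] at hpq; exact absurd hpq.symm d1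
      · rfl
      · rw [E13, E14] at hpq; exact absurd hpq d6
      · rw [E13, E23] at hpq; exact absurd hpq d7
      · rw [E13, E24] at hpq; exact absurd hpq d8
      · rw [E13, E34] at hpq; exact absurd hpq d9
    · rcases memchar q hq with rfl | rfl | rfl | rfl | rfl | rfl
      · rw [E14, E12] at hpq; exact absurd hpq.symm d2
      · rw [E14, E13] at hpq; exact absurd hpq.symm d6
      · rfl
      · rw [E14, E23] at hpq; exact absurd hpq d10
      · rw [E14, E24] at hpq; exact absurd hpq d11
      · rw [E14, E34] at hpq; exact absurd hpq d12
    · rcases memchar q hq with rfl | rfl | rfl | rfl | rfl | rfl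
      · rw [E23, E12] at hpq; exact absurd hpq.symm d3
      · rw [E23, E13] at hpq; exact absurd hpq.symm d7
      · rw [E23, E14] at hpq; exact absurd hpq.symm d10
      · rfl
      · rw [E23, E24] at hpq; exact absurd hpq d13
      · rw [E23, E34] at hpq; exact absurd hpq d14
    · rcases memchar q hq with rfl | rfl | rfl | rfl | rfl | rfl
      · rw [E24, E12] at hpq; exact absurd hpq.symm d4
      · rw [E24, E13] at hpq; exact absurd hpq.symm d8
      · rw [E24, E14] at hpq; exact absurd hpq.symm d11
      · rw [E24, E23] at hpq; exact absurd hpq.symm d13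
      · rfl
      · rw [E24, E34] at hpq; exact absurd hpq d15
    · rcases memchar q hq with rfl | rfl | rfl | rfl | rfl | rfl
      · rw [E34, E12] at hpq; exact absurd hpq.symm d5
      · rw [E34, E13] at hpq; exact absurd hpq.symm d9
      · rw [E34, E14] at hpq; exact absurd hpq.symm d12
      · rw [E34, E23] at hpq; exact absurd hpq.symm d14
      · rw [E34, E24] at hpq; exact absurd hpq.symm d15
      · rfl
  · -- cover
    intro x hx y hy hxy
    simp only [Finset.mem_insert, Finset.mem_singleton] at hx hy
    rcases hx with rfl | rfl | rfl | rfl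
    · rcases hy with rfl | rfl | rfl | rfl
      · exact absurd rfl hxy
      · exact ⟨E12 ▸ m12, E12 ▸ c121, E12 ▸ c122⟩
      · exact ⟨E13 ▸ m13, E13 ▸ c131, E13 ▸ c133⟩
      · exact ⟨E14 ▸ m14, E14 ▸ c141, E14 ▸ c144⟩
    · rcases hy with rfl | rfl | rfl | rfl
      · rw [Sym2.eq_swap]; exact ⟨E12 ▸ m12, E12 ▸ c122, E12 ▸ c121⟩
      · exact absurd rfl hxy
      · exact ⟨E23 ▸ m23, E23 ▸ c232, E23 ▸ c233⟩
      · exact ⟨E24 ▸ m24, E24 ▸ c242, E24 ▸ c244⟩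
    · rcases hy with rfl | rfl | rfl | rfl
      · rw [Sym2.eq_swap]; exact ⟨E13 ▸ m13, E13 ▸ c133, E13 ▸ c131⟩
      · rw [Sym2.eq_swap]; exact ⟨E23 ▸ m23, E23 ▸ c233, E23 ▸ c232⟩
      · exact absurd rfl hxy
      · exact ⟨E34 ▸ m34, E34 ▸ c343, E34 ▸ c344⟩
    · rcases hy with rfl | rfl | rfl | rfl
      · rw [Sym2.eq_swap]; exact ⟨E14 ▸ m14, E14 ▸ c144, E14 ▸ c141⟩
      · rw [Sym2.eq_swap]; exact ⟨E24 ▸ m24, E24 ▸ c244, E24 ▸ c242⟩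
      · rw [Sym2.eq_swap]; exact ⟨E34 ▸ m34, E34 ▸ c344, E34 ▸ c343⟩
      · exact absurd rfl hxy


lemma SatGood.buildPQ (hg : SatGood a b c f T) {e : Finset V} {p q : V}
    (hpe : p ∈ e) (hqe : q ∈ e) (hpq : p ≠ q)
    (hpa : p ≠ a) (hpb : p ≠ b) (hqa : q ≠ a) (hqb : q ≠ b)
    (d1 : e ≠ {p, f p, a}) (d2 : e ≠ {p, f p, b}) (d3 : e ≠ {q, f q, a})
    (d4 : e ≠ {q, f q, b}) (d5 : e ≠ {a, b, c}) (hfq : f q ≠ p) :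
    HasBergeClique 4 (insert e (satH a b c f T)) := by
  have hfpa : f p ≠ a := hg.hfa p hpa hpb
  have hfpb : f p ≠ b := hg.hfb p hpa hpb
  have hfpp : f p ≠ p := hg.hfx p hpa hpb
  have hfqa : f q ≠ a := hg.hfa q hqa hqb
  have hfqb : f q ≠ b := hg.hfb q hqa hqb
  have hfqq : f q ≠ q := hg.hfx q hqa hqb
  exact mkBerge (insert e (satH a b c f T)) p q a b
    e {p, f p, a} {p, f p, b} {q, f q, a} {q, f q, b} {a, b, c}
    hpq hpa hpb hqa hqb hg.hab
    (Finset.mem_insert_self _ _)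
    (Finset.mem_insert_of_mem (hg.memA hpa hpb))
    (Finset.mem_insert_of_mem (hg.memB hpa hpb))
    (Finset.mem_insert_of_mem (hg.memA hqa hqb))
    (Finset.mem_insert_of_mem (hg.memB hqa hqb))
    (Finset.mem_insert_of_mem SatGood.memABC)
    hpe hqe (by simp) (by simp) (by simp) (by simp) (by simp) (by simp)
    (by simp) (by simp) (by simp) (by simp)
    d1 d2 d3 d4 d5
    (ne_of_mem_of_not_mem' (show a ∈ ({p, f p, a} : Finset V) by simp)
      (by simp [Ne.symm hpa, Ne.symm hfpa, hg.hab]))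
    (ne_of_mem_of_not_mem' (show p ∈ ({p, f p, a} : Finset V) by simp)
      (by simp [hpq, Ne.symm hfq, hpa]))
    (ne_of_mem_of_not_mem' (show a ∈ ({p, f p, a} : Finset V) by simp)
      (by simp [Ne.symm hqa, Ne.symm hfqa, hg.hab]))
    ((ne_of_mem_of_not_mem' (show b ∈ ({a, b, c} : Finset V) by simp)
      (by simp [Ne.symm hpb, Ne.symm hfpb, Ne.symm hg.hab])).symm)
    (ne_of_mem_of_not_mem' (show b ∈ ({p, f p, b} : Finset V) by simp)
      (by simp [Ne.symm hqb, Ne.symm hfqb, Ne.symm hg.hab]))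
    (ne_of_mem_of_not_mem' (show p ∈ ({p, f p, b} : Finset V) by simp)
      (by simp [hpq, Ne.symm hfq, hpb]))
    ((ne_of_mem_of_not_mem' (show a ∈ ({a, b, c} : Finset V) by simp)
      (by simp [Ne.symm hpa, Ne.symm hfpa, hg.hab]) ).symm)
    (ne_of_mem_of_not_mem' (show a ∈ ({q, f q, a} : Finset V) by simp)
      (by simp [Ne.symm hqa, Ne.symm hfqa, hg.hab]))
    ((ne_of_mem_of_not_mem' (show b ∈ ({a, b, c} : Finset V) by simp)
      (by simp [Ne.symm hqb, Ne.symm hfqb, Ne.symm hg.hab])).symm)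
    ((ne_of_mem_of_not_mem' (show a ∈ ({a, b, c} : Finset V) by simp)
      (by simp [Ne.symm hqa, Ne.symm hfqa, hg.hab])).symm)


lemma SatGood.saturate (hg : SatGood a b c f T) {e : Finset V} (hcard : e.card = 3)
    (heH : e ∉ satH a b c f T) : HasBergeClique 4 (insert e (satH a b c f T)) := by
  have habcH : ({a, b, c} : Finset V) ∈ satH a b c f T := SatGood.memABC
  have d5 : e ≠ {a, b, c} := fun h => heH (h ▸ habcH)
  by_cases hae : a ∈ e
  · by_cases hbe : b ∈ e
    · -- case AB : core {a, b, c, f c}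
      have hda : f c ≠ a := hg.hfa c hg.hca hg.hcb
      have hdb : f c ≠ b := hg.hfb c hg.hca hg.hcb
      have hdc : f c ≠ c := hg.hfx c hg.hca hg.hcb
      have hffa : f (f c) ≠ a := hg.hfa (f c) hda hdb
      have hffb : f (f c) ≠ b := hg.hfb (f c) hda hdb
      have hffd : f (f c) ≠ f c := hg.hfx (f c) hda hdb
      have hffc : f (f c) ≠ c := hg.hfc (f c) hda hdb hdc
      exact mkBerge (insert e (satH a b c f T)) a b c (f c)
        e {a, b, c} {f c, f (f c), a} {c, f c, b} {f c, f (f c), b} {c, f c, a}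
        hg.hab (Ne.symm hg.hca) (Ne.symm hda) (Ne.symm hg.hcb) (Ne.symm hdb) (Ne.symm hdc)
        (Finset.mem_insert_self _ _)
        (Finset.mem_insert_of_mem habcH)
        (Finset.mem_insert_of_mem (hg.memA hda hdb))
        (Finset.mem_insert_of_mem (hg.memB hg.hca hg.hcb))
        (Finset.mem_insert_of_mem (hg.memB hda hdb))
        (Finset.mem_insert_of_mem (hg.memA hg.hca hg.hcb))
        hae hbe (by simp) (by simp) (by simp) (by simp) (by simp) (by simp)
        (by simp) (by simp) (by simp) (by simp)
        d5
        (ne_of_mem_of_not_mem' hbe (by simp [Ne.symm hdb, Ne.symm hffb, Ne.symm hg.hab]))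
        (ne_of_mem_of_not_mem' hae (by simp [Ne.symm hg.hca, Ne.symm hda, hg.hab]))
        (ne_of_mem_of_not_mem' hae (by simp [Ne.symm hda, Ne.symm hffa, hg.hab]))
        (ne_of_mem_of_not_mem' hbe (by simp [Ne.symm hg.hcb, Ne.symm hdb, Ne.symm hg.hab]))
        (ne_of_mem_of_not_mem' (show b ∈ ({a, b, c} : Finset V) by simp)
          (by simp [Ne.symm hdb, Ne.symm hffb, Ne.symm hg.hab]))
        (ne_of_mem_of_not_mem' (show a ∈ ({a, b, c} : Finset V) by simp)
          (by simp [Ne.symm hg.hca, Ne.symm hda, hg.hab]))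
        (ne_of_mem_of_not_mem' (show a ∈ ({a, b, c} : Finset V) by simp)
          (by simp [Ne.symm hda, Ne.symm hffa, hg.hab]))
        (ne_of_mem_of_not_mem' (show b ∈ ({a, b, c} : Finset V) by simp)
          (by simp [Ne.symm hg.hcb, Ne.symm hdb, Ne.symm hg.hab]))
        (ne_of_mem_of_not_mem' (show a ∈ ({f c, f (f c), a} : Finset V) by simp)
          (by simp [Ne.symm hg.hca, Ne.symm hda, hg.hab]))
        (ne_of_mem_of_not_mem' (show a ∈ ({f c, f (f c), a} : Finset V) by simp)
          (by simp [Ne.symm hda, Ne.symm hffa, hg.hab]))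
        ((ne_of_mem_of_not_mem' (show c ∈ ({c, f c, a} : Finset V) by simp)
          (by simp [Ne.symm hdc, Ne.symm hffc, hg.hca])).symm)
        (ne_of_mem_of_not_mem' (show c ∈ ({c, f c, b} : Finset V) by simp)
          (by simp [Ne.symm hdc, Ne.symm hffc, hg.hcb]))
        (ne_of_mem_of_not_mem' (show b ∈ ({c, f c, b} : Finset V) by simp)
          (by simp [Ne.symm hg.hcb, Ne.symm hdb, Ne.symm hg.hab]))
        (ne_of_mem_of_not_mem' (show b ∈ ({f c, f (f c), b} : Finset V) by simp)
          (by simp [Ne.symm hg.hcb, Ne.symm hdb, Ne.symm hg.hab]))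
    · -- case A : a ∈ e, b ∉ e
      have k2 : (e.erase a).card = 2 := by rw [Finset.card_erase_of_mem hae, hcard]
      obtain ⟨y, z, hyz, hyzset⟩ := Finset.card_eq_two.mp k2
      have hyeE : y ∈ e.erase a := by rw [hyzset]; simp
      have hzeE : z ∈ e.erase a := by rw [hyzset]; simp
      have hye : y ∈ e := Finset.mem_of_mem_erase hyeE
      have hze : z ∈ e := Finset.mem_of_mem_erase hzeE
      have hya : y ≠ a := Finset.ne_of_mem_erase hyeE
      have hza : z ≠ a := Finset.ne_of_mem_erase hzeE
      have hyb : y ≠ b := fun h => hbe (h ▸ hye)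
      have hzb : z ≠ b := fun h => hbe (h ▸ hze)
      have hE : e = insert a {y, z} := by rw [← hyzset, Finset.insert_erase hae]
      have hfy : f y ≠ z := by
        intro h
        apply heH
        have hm := hg.memA hya hyb
        rw [h] at hm
        have : ({y, z, a} : Finset V) = e := by rw [hE]; ext w; simp; tauto
        rwa [this] at hm
      have hfz : f z ≠ y := by
        intro h
        apply heH
        have hm := hg.memA hza hzb
        rw [h] at hm
        have : ({z, y, a} : Finset V) = e := by rw [hE]; ext w; simp; tauto
        rwa [this] at hm
      refine hg.buildPQ hye hze hyz hya hyb hza hzb ?_ ?_ ?_ ?_ d5 hfz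
      · exact ne_of_mem_of_not_mem' hze (by simp [Ne.symm hyz, Ne.symm hfy, hza])
      · exact ne_of_mem_of_not_mem' hae (by simp [Ne.symm hya, Ne.symm (hg.hfa y hya hyb), hg.hab])
      · exact ne_of_mem_of_not_mem' hye (by simp [hyz, Ne.symm hfz, hya])
      · exact ne_of_mem_of_not_mem' hae (by simp [Ne.symm hza, Ne.symm (hg.hfa z hza hzb), hg.hab])
  · by_cases hbe : b ∈ e
    · -- case B : b ∈ e, a ∉ e
      have k2 : (e.erase b).card = 2 := by rw [Finset.card_erase_of_mem hbe, hcard]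
      obtain ⟨y, z, hyz, hyzset⟩ := Finset.card_eq_two.mp k2
      have hyeE : y ∈ e.erase b := by rw [hyzset]; simp
      have hzeE : z ∈ e.erase b := by rw [hyzset]; simp
      have hye : y ∈ e := Finset.mem_of_mem_erase hyeE
      have hze : z ∈ e := Finset.mem_of_mem_erase hzeE
      have hyb : y ≠ b := Finset.ne_of_mem_erase hyeE
      have hzb : z ≠ b := Finset.ne_of_mem_erase hzeE
      have hya : y ≠ a := fun h => hae (h ▸ hye)
      have hza : z ≠ a := fun h => hae (h ▸ hze)
      have hE : e = insert b {y, z} := by rw [← hyzset, Finset.insert_erase hbe]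
      have hfy : f y ≠ z := by
        intro h
        apply heH
        have hm := hg.memB hya hyb
        rw [h] at hm
        have : ({y, z, b} : Finset V) = e := by rw [hE]; ext w; simp; tauto
        rwa [this] at hm
      have hfz : f z ≠ y := by
        intro h
        apply heH
        have hm := hg.memB hza hzb
        rw [h] at hm
        have : ({z, y, b} : Finset V) = e := by rw [hE]; ext w; simp; tauto
        rwa [this] at hm
      refine hg.buildPQ hye hze hyz hya hyb hza hzb ?_ ?_ ?_ ?_ d5 hfz
      · exact ne_of_mem_of_not_mem' hbe (by simp [Ne.symm hyb, Ne.symm (hg.hfb y hya hyb), Ne.symm hg.hab])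
      · exact ne_of_mem_of_not_mem' hze (by simp [Ne.symm hyz, Ne.symm hfy, hzb])
      · exact ne_of_mem_of_not_mem' hbe (by simp [Ne.symm hzb, Ne.symm (hg.hfb z hza hzb), Ne.symm hg.hab])
      · exact ne_of_mem_of_not_mem' hye (by simp [hyz, Ne.symm hfz, hyb])
    · -- case O : a ∉ e, b ∉ e
      obtain ⟨x, y, z, hxy, hxz, hyz, hset⟩ := Finset.card_eq_three.mp hcard
      have hxe : x ∈ e := by rw [hset]; simp
      have hye : y ∈ e := by rw [hset]; simp
      have hze : z ∈ e := by rw [hset]; simp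
      have hxa : x ≠ a := fun h => hae (h ▸ hxe)
      have hya : y ≠ a := fun h => hae (h ▸ hye)
      have hza : z ≠ a := fun h => hae (h ▸ hze)
      have hxb : x ≠ b := fun h => hbe (h ▸ hxe)
      have hyb : y ≠ b := fun h => hbe (h ▸ hye)
      have hzb : z ≠ b := fun h => hbe (h ▸ hze)
      have build : ∀ p q : V, p ∈ e → q ∈ e → p ≠ q → p ≠ a → p ≠ b → q ≠ a → q ≠ b →
          f p ≠ q → f q ≠ p → HasBergeClique 4 (insert e (satH a b c f T)) := by
        intro p q hpe hqe hpq hpa hpb hqa hqb hfp hfq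
        refine hg.buildPQ hpe hqe hpq hpa hpb hqa hqb ?_ ?_ ?_ ?_ d5 hfq
        · exact (ne_of_mem_of_not_mem' (show a ∈ ({p, f p, a} : Finset V) by simp) hae).symm
        · exact (ne_of_mem_of_not_mem' (show b ∈ ({p, f p, b} : Finset V) by simp) hbe).symm
        · exact (ne_of_mem_of_not_mem' (show a ∈ ({q, f q, a} : Finset V) by simp) hae).symm
        · exact (ne_of_mem_of_not_mem' (show b ∈ ({q, f q, b} : Finset V) by simp) hbe).symm
      by_cases m1 : f x = y ∨ f y = x
      · by_cases m2 : f x = z ∨ f z = x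
        · by_cases m3 : f y = z ∨ f z = y
          · exact absurd (hg.tri hxa hxb hya hyb hza hzb hxy hyz hxz m1 m3 m2) id
          · push_neg at m3
            exact build y z hye hze hyz hya hyb hza hzb m3.1 m3.2
        · push_neg at m2
          exact build x z hxe hze hxz hxa hxb hza hzb m2.1 m2.2
      · push_neg at m1
        exact build x y hxe hye hxy hxa hxb hya hyb m1.1 m1.2

end Sat

def fvaln (n x : ℕ) : ℕ :=
  if x = 2 then 3 else if x < 3 then x
  else if x = n - 1 ∧ n % 2 = 0 then 3
  else if x % 2 = 1 then x + 1 else x - 1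

def gvaln (x : ℕ) : ℕ := if x = 2 then 0 else if x = 3 then 1 else x - 1

lemma fvaln_lt (n x : ℕ) (hn : 10 ≤ n) (hx : x < n) : fvaln n x < n := by
  unfold fvaln; split_ifs <;> omega

lemma fvaln_two (n : ℕ) : fvaln n 2 = 3 := by norm_num [fvaln]

lemma fvaln_ge3 (n x : ℕ) (hn : 10 ≤ n) (hx : x < n) (h2 : 2 ≤ x) : 3 ≤ fvaln n x := by
  unfold fvaln; split_ifs <;> omega

lemma fvaln_ne (n x : ℕ) (hn : 10 ≤ n) (hx : x < n) (h2 : 2 ≤ x) : fvaln n x ≠ x := by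
  unfold fvaln; split_ifs <;> omega

lemma fvaln_ne2 (n x : ℕ) (hn : 10 ≤ n) (hx : x < n) (h2 : 2 ≤ x) : fvaln n x ≠ 2 := by
  unfold fvaln; split_ifs <;> omega

lemma fvaln_inv (n x : ℕ) (hn : 10 ≤ n) (hx : x < n) (h2 : 2 ≤ x) :
    fvaln n (fvaln n x) = x ∨ fvaln n x = 3 := by
  unfold fvaln; split_ifs <;> omega

lemma fvaln_T (n x : ℕ) (hn : 10 ≤ n) (hx : x < n) (h2 : 2 ≤ x) :
    (x = 2 ∨ (3 ≤ x ∧ x % 2 = 1)) ∨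
    ((fvaln n x = 2 ∨ (3 ≤ fvaln n x ∧ fvaln n x % 2 = 1)) ∧ fvaln n (fvaln n x) = x) := by
  unfold fvaln; split_ifs <;> omega

lemma gvaln_lt (n x : ℕ) (hn : 10 ≤ n) (hx : x < n) : gvaln x < n := by
  unfold gvaln; split_ifs <;> omega

lemma gvaln_notT (x : ℕ) (hT : x = 2 ∨ (3 ≤ x ∧ x % 2 = 1)) :
    ¬(gvaln x = 2 ∨ (3 ≤ gvaln x ∧ gvaln x % 2 = 1)) := by
  unfold gvaln
  split_ifs with h1 h2
  · simp
  · omega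
  · omega

lemma gvaln_inj (x y : ℕ) (hx : x = 2 ∨ (3 ≤ x ∧ x % 2 = 1))
    (hy : y = 2 ∨ (3 ≤ y ∧ y % 2 = 1)) (h : gvaln x = gvaln y) : x = y := by
  unfold gvaln at h; split_ifs at h <;> omega


/-- for `n ≥ 10`, `sat₃(n, Berge-K₄) ≤ n` if `n` is odd and
`≤ n + 1` if `n` is even: there is a Berge-`K₄`-saturated 3-uniform hypergraph on
`n` vertices with at most that many edges. -/
theorem stmt18 (n : ℕ) (hn : 10 ≤ n) :
    ∃ H : Finset (Finset (Fin n)),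
      (∀ e ∈ H, e.card = 3) ∧
      ¬ HasBergeClique 4 H ∧
      (∀ e : Finset (Fin n), e.card = 3 → e ∉ H →
        HasBergeClique 4 (insert e H)) ∧
      H.card ≤ if Odd n then n else n + 1 := by
  let a : Fin n := ⟨0, by omega⟩
  let b : Fin n := ⟨1, by omega⟩
  let c : Fin n := ⟨2, by omega⟩
  let f : Fin n → Fin n := fun x => ⟨fvaln n x.1, fvaln_lt n x.1 hn x.2⟩
  let T : Finset (Fin n) := Finset.univ.filter fun x => x.1 = 2 ∨ (3 ≤ x.1 ∧ x.1 % 2 = 1)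
  have hval : ∀ x : Fin n, (f x).1 = fvaln n x.1 := fun x => rfl
  have hS : ∀ x : Fin n, x ≠ a → x ≠ b → 2 ≤ x.1 := by
    intro x h1 h2
    have h1' : x.1 ≠ 0 := fun h => h1 (Fin.ext h)
    have h2' : x.1 ≠ 1 := fun h => h2 (Fin.ext h)
    omega
  have hfc3 : (f c).1 = 3 := fvaln_two n
  have hg : SatGood a b c f T := by
    constructor
    · exact fun h => absurd (congrArg Fin.val h) (by norm_num)
    · exact fun h => absurd (congrArg Fin.val h) (by norm_num)
    · exact fun h => absurd (congrArg Fin.val h) (by norm_num)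
    · intro x h1 h2
      exact fun h => absurd (congrArg Fin.val h)
        (show ¬ fvaln n x.1 = 0 by have := fvaln_ge3 n x.1 hn x.2 (hS x h1 h2); omega)
    · intro x h1 h2
      exact fun h => absurd (congrArg Fin.val h)
        (show ¬ fvaln n x.1 = 1 by have := fvaln_ge3 n x.1 hn x.2 (hS x h1 h2); omega)
    · intro x h1 h2
      exact fun h => absurd (congrArg Fin.val h)
        (show ¬ fvaln n x.1 = x.1 from fvaln_ne n x.1 hn x.2 (hS x h1 h2))
    · intro x h1 h2 h3
      exact fun h => absurd (congrArg Fin.val h)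
        (show ¬ fvaln n x.1 = 2 from fvaln_ne2 n x.1 hn x.2 (hS x h1 h2))
    · intro x h1 h2
      rcases fvaln_inv n x.1 hn x.2 (hS x h1 h2) with h | h
      · exact Or.inl (Fin.ext (show fvaln n (fvaln n x.1) = x.1 from h))
      · exact Or.inr (Fin.ext (show fvaln n x.1 = fvaln n 2 from by rw [fvaln_two]; exact h))
    · intro t ht
      rw [Finset.mem_filter] at ht
      exact fun h => absurd (congrArg Fin.val h) (show ¬ t.1 = 0 by omega)
    · intro t ht
      rw [Finset.mem_filter] at ht
      exact fun h => absurd (congrArg Fin.val h) (show ¬ t.1 = 1 by omega)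
    · intro x h1 h2
      rcases fvaln_T n x.1 hn x.2 (hS x h1 h2) with h | ⟨h3, h4⟩
      · exact Or.inl (Finset.mem_filter.mpr ⟨Finset.mem_univ _, h⟩)
      · refine Or.inr ⟨Finset.mem_filter.mpr ⟨Finset.mem_univ _, by rw [hval]; exact h3⟩,
          Fin.ext (show fvaln n (fvaln n x.1) = x.1 from h4)⟩
  refine ⟨satH a b c f T, fun e he => hg.cardH he, hg.noBerge,
    fun e h3 hne => hg.saturate h3 hne, ?_⟩
  -- counting
  have h2T : 2 * T.card ≤ n := by
    let g : Fin n → Fin n := fun t => ⟨gvaln t.1, gvaln_lt n t.1 hn t.2⟩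
    have hmaps : ∀ t ∈ T, g t ∈ Finset.univ.filter
        fun x : Fin n => ¬(x.1 = 2 ∨ (3 ≤ x.1 ∧ x.1 % 2 = 1)) := by
      intro t ht
      rw [Finset.mem_filter] at ht ⊢
      exact ⟨Finset.mem_univ _, gvaln_notT t.1 ht.2⟩
    have hinj : Set.InjOn g ↑T := by
      intro t1 h1 t2 h2 h
      rw [Finset.mem_coe, Finset.mem_filter] at h1 h2
      exact Fin.ext (gvaln_inj t1.1 t2.1 h1.2 h2.2 (congrArg Fin.val h))
    have hle := Finset.card_le_card_of_injOn g hmaps hinj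
    have hsum := Finset.card_filter_add_card_filter_not
      (s := (Finset.univ : Finset (Fin n)))
      (p := fun x : Fin n => x.1 = 2 ∨ (3 ≤ x.1 ∧ x.1 % 2 = 1))
    rw [Finset.card_univ, Fintype.card_fin] at hsum
    have hT' : T.card = (Finset.univ.filter
      (fun x : Fin n => x.1 = 2 ∨ (3 ≤ x.1 ∧ x.1 % 2 = 1))).card := rfl
    omega
  have hHle : (satH a b c f T).card ≤ 1 + (T.card + T.card) := by
    unfold satH
    refine (Finset.card_insert_le _ _).trans ?_
    have h1 := Finset.card_union_le (T.image fun x => ({x, f x, a} : Finset (Fin n)))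
      (T.image fun x => ({x, f x, b} : Finset (Fin n)))
    have h2 := Finset.card_image_le (s := T) (f := fun x => ({x, f x, a} : Finset (Fin n)))
    have h3 := Finset.card_image_le (s := T) (f := fun x => ({x, f x, b} : Finset (Fin n)))
    omega
  by_cases ho : Odd n
  · rw [if_pos ho]
    have : n % 2 = 1 := Nat.odd_iff.mp ho
    omega
  · rw [if_neg ho]
    omega
end
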